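/- In addition to the hypotheses ensuring positivity (conditions (ii)–(iv) of the interior-cell positivity theorem, with z₂ ≥ 0 and 6Δt·z₂·max{P^{βγ}, 0} ≤ 1 also imposed), assume: all corner concentration values lie in [0,1] (equivalently 0 ≤ r ≤ Φ at every corner); 0 ≤ c̃^{βγ} ≤ 1 for every cell Gauss point, with c̃^{βγ} = c(x_i^β, y_j^γ) whenever q^{βγ} < 0; and the discrete pressure relation holds for every interior cell K_{ij}: ΔxΔy·∑_{β,γ} w_β w_γ (z₁·r(x_i^β,y_j^γ) + z₂·(Φ(x_i^β,y_j^γ) − r(x_i^β,y_j^γ)))·P^{βγ} = Δy·∑_β w_β(u₁⁺_{i−1/2,j,β} − u₁⁺_{i+1/2,j,β}) + Δx·∑_β w_β(u₂⁺_{i,j−1/2,β} − u₂⁺_{i,j+1/2,β}) + ΔxΔy·∑_{β,γ} w_β w_γ q^{βγ}, where Φ(x_i^β,y_j^γ) is the bilinear μ-product combination of the four corner values of Φ. Then the Euler-forward cell-average update satisfies 0 ≤ r̄^{new}_{ij} ≤ Φ̄_{ij} := (1/4)·∑ of Φ over the four corners of K_{ij}, for every interior cell (2 ≤ i ≤ N_x−1,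 2 ≤ j ≤ N_y−1). -/

import Mathlib

noncomputable section

namespace DG2D

/-- Gauss constant `μ₁ = (3+√3)/6`. -/
def mu1 : ℝ := (3 + Real.sqrt 3) / 6

/-- Gauss constant `μ₂ = (3-√3)/6`. -/
def mu2 : ℝ := (3 - Real.sqrt 3) / 6

/-- Value at the Gauss point `β` of an edge, from the two endpoint (corner) values:
`β = 1` gives `μ₁·a + μ₂·b`, `β = 2` gives `μ₂·a + μ₁·b`. -/
def ga (β : Fin 2) (a b : ℝ) : ℝ := if β = 0 then mu1 * a + mu2 * b else mu2 * a + mu1 * b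

/-- Cell average `r̄_{ij} = (1/4)·∑ cΦ` over the four corners of `K_{ij}`.
`Φ i j` denotes the corner value `Φ_{i+1/2,j+1/2}`; `c00 i j`, `c10 i j`, `c01 i j`,
`c11 i j` denote the corner values of `c` in cell `K_{ij}` at the corners
`(i-1/2,j-1/2)`, `(i+1/2,j-1/2)`, `(i-1/2,j+1/2)`, `(i+1/2,j+1/2)` respectively. -/
def rbar (Φ c00 c10 c01 c11 : ℕ → ℕ → ℝ) (i j : ℕ) : ℝ :=
  (c00 i j * Φ (i - 1) (j - 1) + c10 i j * Φ i (j - 1)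
    + c01 i j * Φ (i - 1) j + c11 i j * Φ i j) / 4

/-- Trace `c⁻` (from `K_{ij}`) at Gauss point `β` of the vertical edge `x_{i+1/2}`, row `j`. -/
def cmV (c10 c11 : ℕ → ℕ → ℝ) (i j : ℕ) (β : Fin 2) : ℝ := ga β (c10 i j) (c11 i j)

/-- Trace `c⁺` (from `K_{i+1,j}`) at Gauss point `β` of the vertical edge `x_{i+1/2}`, row `j`. -/
def cpV (c00 c01 : ℕ → ℕ → ℝ) (i j : ℕ) (β : Fin 2) : ℝ := ga β (c00 (i + 1) j) (c01 (i + 1) j)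

/-- Trace `c⁻` (from `K_{ij}`) at Gauss point `β` of the horizontal edge `y_{j+1/2}`, column `i`. -/
def cmH (c01 c11 : ℕ → ℕ → ℝ) (i j : ℕ) (β : Fin 2) : ℝ := ga β (c01 i j) (c11 i j)

/-- Trace `c⁺` (from `K_{i,j+1}`) at Gauss point `β` of the horizontal edge `y_{j+1/2}`. -/
def cpH (c00 c10 : ℕ → ℕ → ℝ) (i j : ℕ) (β : Fin 2) : ℝ := ga β (c00 i (j + 1)) (c10 i (j + 1))

/-- Jump `[c] = c⁺ - c⁻` at a vertical-edge Gauss point. -/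
def jumpV (c00 c10 c01 c11 : ℕ → ℕ → ℝ) (i j : ℕ) (β : Fin 2) : ℝ :=
  cpV c00 c01 i j β - cmV c10 c11 i j β

/-- Jump `[c] = c⁺ - c⁻` at a horizontal-edge Gauss point. -/
def jumpH (c00 c10 c01 c11 : ℕ → ℕ → ℝ) (i j : ℕ) (β : Fin 2) : ℝ :=
  cpH c00 c10 i j β - cmH c01 c11 i j β

/-- Convective flux `û₁c = u₁⁺·c⁺ - α·[c]` at vertical-edge Gauss points. -/
def uc1 (u1 : ℕ → ℕ → Fin 2 → ℝ) (c00 c10 c01 c11 : ℕ → ℕ → ℝ) (α : ℝ)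
    (i j : ℕ) (β : Fin 2) : ℝ :=
  u1 i j β * cpV c00 c01 i j β - α * (cpV c00 c01 i j β - cmV c10 c11 i j β)

/-- Convective flux `û₂c = u₂⁺·c⁺ - α·[c]` at horizontal-edge Gauss points. -/
def uc2 (u2 : ℕ → ℕ → Fin 2 → ℝ) (c00 c10 c01 c11 : ℕ → ℕ → ℝ) (α : ℝ)
    (i j : ℕ) (β : Fin 2) : ℝ :=
  u2 i j β * cpH c00 c10 i j β - α * (cpH c00 c10 i j β - cmH c01 c11 i j β)

/-- Convection part `H^c_{ij}`. -/
def Hc (u1 u2 : ℕ → ℕ → Fin 2 → ℝ) (Φ c00 c10 c01 c11 : ℕ → ℕ → ℝ) (α Δx Δy Δt : ℝ)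
    (i j : ℕ) : ℝ :=
  rbar Φ c00 c10 c01 c11 i j / 3
    + (Δt / Δx) * ∑ β : Fin 2, (1 / 2 : ℝ) *
        (uc1 u1 c00 c10 c01 c11 α (i - 1) j β - uc1 u1 c00 c10 c01 c11 α i j β)
    + (Δt / Δy) * ∑ β : Fin 2, (1 / 2 : ℝ) *
        (uc2 u2 c00 c10 c01 c11 α i (j - 1) β - uc2 u2 c00 c10 c01 c11 α i j β)

/-- Derivative trace `(c_x)⁻` at a vertical-edge Gauss point:
`(c_x)⁻_{i+1/2,β} = (c⁻_{i+1/2,β} - c⁺_{i-1/2,β})/Δx`. -/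
def cxmV (c00 c10 c01 c11 : ℕ → ℕ → ℝ) (Δx : ℝ) (i j : ℕ) (β : Fin 2) : ℝ :=
  (cmV c10 c11 i j β - cpV c00 c01 (i - 1) j β) / Δx

/-- Derivative trace `(c_x)⁺` at a vertical-edge Gauss point:
`(c_x)⁺_{i+1/2,β} = (c⁻_{i+3/2,β} - c⁺_{i+1/2,β})/Δx`. -/
def cxpV (c00 c10 c01 c11 : ℕ → ℕ → ℝ) (Δx : ℝ) (i j : ℕ) (β : Fin 2) : ℝ :=
  (cmV c10 c11 (i + 1) j β - cpV c00 c01 i j β) / Δx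

/-- Tangential derivative trace `(c_y)⁻` on a vertical edge:
`(√3/Δy)·(c⁻_{i+1/2,2} - c⁻_{i+1/2,1})` (the same for both Gauss points). -/
def cymV (c10 c11 : ℕ → ℕ → ℝ) (Δy : ℝ) (i j : ℕ) : ℝ :=
  (Real.sqrt 3 / Δy) * (cmV c10 c11 i j 1 - cmV c10 c11 i j 0)

/-- Tangential derivative trace `(c_y)⁺` on a vertical edge. -/
def cypV (c00 c01 : ℕ → ℕ → ℝ) (Δy : ℝ) (i j : ℕ) : ℝ :=
  (Real.sqrt 3 / Δy) * (cpV c00 c01 i j 1 - cpV c00 c01 i j 0)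

/-- Average `{D₁₁c_x + D₁₂c_y}` at a vertical-edge Gauss point. -/
def GxV (D11m D11p D12m D12p : ℕ → ℕ → Fin 2 → ℝ) (c00 c10 c01 c11 : ℕ → ℕ → ℝ)
    (Δx Δy : ℝ) (i j : ℕ) (β : Fin 2) : ℝ :=
  (D11m i j β * cxmV c00 c10 c01 c11 Δx i j β + D12m i j β * cymV c10 c11 Δy i j
    + D11p i j β * cxpV c00 c10 c01 c11 Δx i j β + D12p i j β * cypV c00 c01 Δy i j) / 2

/-- x-diffusion part `H^d_x`. -/
def Hdx (D11m D11p D12m D12p : ℕ → ℕ → Fin 2 → ℝ) (Φ c00 c10 c01 c11 : ℕ → ℕ → ℝ)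
    (αt Δx Δy Δt : ℝ) (i j : ℕ) : ℝ :=
  rbar Φ c00 c10 c01 c11 i j / 6
    - (Δt / Δx) * ∑ β : Fin 2, (1 / 2 : ℝ) *
        ((GxV D11m D11p D12m D12p c00 c10 c01 c11 Δx Δy (i - 1) j β
            + (αt / Δy) * jumpV c00 c10 c01 c11 (i - 1) j β)
          - (GxV D11m D11p D12m D12p c00 c10 c01 c11 Δx Δy i j β
            + (αt / Δy) * jumpV c00 c10 c01 c11 i j β))

/-- Derivative trace `(c_y)⁻` at a horizontal-edge Gauss point. -/
def cymH (c00 c10 c01 c11 : ℕ → ℕ → ℝ) (Δy : ℝ) (i j : ℕ) (β : Fin 2) : ℝ :=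
  (cmH c01 c11 i j β - cpH c00 c10 i (j - 1) β) / Δy

/-- Derivative trace `(c_y)⁺` at a horizontal-edge Gauss point. -/
def cypH (c00 c10 c01 c11 : ℕ → ℕ → ℝ) (Δy : ℝ) (i j : ℕ) (β : Fin 2) : ℝ :=
  (cmH c01 c11 i (j + 1) β - cpH c00 c10 i j β) / Δy

/-- Tangential derivative trace `(c_x)⁻` on a horizontal edge. -/
def cxmH (c01 c11 : ℕ → ℕ → ℝ) (Δx : ℝ) (i j : ℕ) : ℝ :=
  (Real.sqrt 3 / Δx) * (cmH c01 c11 i j 1 - cmH c01 c11 i j 0)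

/-- Tangential derivative trace `(c_x)⁺` on a horizontal edge. -/
def cxpH (c00 c10 : ℕ → ℕ → ℝ) (Δx : ℝ) (i j : ℕ) : ℝ :=
  (Real.sqrt 3 / Δx) * (cpH c00 c10 i j 1 - cpH c00 c10 i j 0)

/-- Average `{D₂₁c_x + D₂₂c_y}` at a horizontal-edge Gauss point. -/
def GyH (D21m D21p D22m D22p : ℕ → ℕ → Fin 2 → ℝ) (c00 c10 c01 c11 : ℕ → ℕ → ℝ)
    (Δx Δy : ℝ) (i j : ℕ) (β : Fin 2) : ℝ :=
  (D21m i j β * cxmH c01 c11 Δx i j + D22m i j β * cymH c00 c10 c01 c11 Δy i j β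
    + D21p i j β * cxpH c00 c10 Δx i j + D22p i j β * cypH c00 c10 c01 c11 Δy i j β) / 2

/-- y-diffusion part `H^d_y`. -/
def Hdy (D21m D21p D22m D22p : ℕ → ℕ → Fin 2 → ℝ) (Φ c00 c10 c01 c11 : ℕ → ℕ → ℝ)
    (αt Δx Δy Δt : ℝ) (i j : ℕ) : ℝ :=
  rbar Φ c00 c10 c01 c11 i j / 6
    - (Δt / Δy) * ∑ β : Fin 2, (1 / 2 : ℝ) *
        ((GyH D21m D21p D22m D22p c00 c10 c01 c11 Δx Δy i (j - 1) β
            + (αt / Δx) * jumpH c00 c10 c01 c11 i (j - 1) β)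
          - (GyH D21m D21p D22m D22p c00 c10 c01 c11 Δx Δy i j β
            + (αt / Δx) * jumpH c00 c10 c01 c11 i j β))

/-- Value of the bilinear function `c` at the interior Gauss point `(β,γ)` of cell `K_{ij}`. -/
def cGP (c00 c10 c01 c11 : ℕ → ℕ → ℝ) (i j : ℕ) (β γ : Fin 2) : ℝ :=
  ga β (ga γ (c00 i j) (c01 i j)) (ga γ (c10 i j) (c11 i j))

/-- Value of the bilinear function `r = cΦ` at the interior Gauss point `(β,γ)` of `K_{ij}`. -/
def rGP (Φ c00 c10 c01 c11 : ℕ → ℕ → ℝ) (i j : ℕ) (β γ : Fin 2) : ℝ :=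
  ga β (ga γ (c00 i j * Φ (i - 1) (j - 1)) (c01 i j * Φ (i - 1) j))
    (ga γ (c10 i j * Φ i (j - 1)) (c11 i j * Φ i j))

/-- Value of the bilinear interpolant of `Φ` at the interior Gauss point `(β,γ)` of `K_{ij}`. -/
def phiGP (Φ : ℕ → ℕ → ℝ) (i j : ℕ) (β γ : Fin 2) : ℝ :=
  ga β (ga γ (Φ (i - 1) (j - 1)) (Φ (i - 1) j)) (ga γ (Φ i (j - 1)) (Φ i j))

/-- Source part `H^s_{ij}`. -/
def Hs (Φ c00 c10 c01 c11 : ℕ → ℕ → ℝ) (q ct P : ℕ → ℕ → Fin 2 → Fin 2 → ℝ)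
    (z1 Δt : ℝ) (i j : ℕ) : ℝ :=
  rbar Φ c00 c10 c01 c11 i j / 3
    + Δt * ∑ β : Fin 2, ∑ γ : Fin 2, (1 / 2 : ℝ) * (1 / 2 : ℝ) *
        (ct i j β γ * q i j β γ - z1 * rGP Φ c00 c10 c01 c11 i j β γ * P i j β γ)

/-- The Euler-forward cell-average update `r̄^{new}_{ij} = H^c + H^d_x + H^d_y + H^s`. -/
def rbarnew (u1 u2 D11m D11p D12m D12p D21m D21p D22m D22p : ℕ → ℕ → Fin 2 → ℝ)
    (Φ c00 c10 c01 c11 : ℕ → ℕ → ℝ) (q ct P : ℕ → ℕ → Fin 2 → Fin 2 → ℝ)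
    (α αt z1 Δx Δy Δt : ℝ) (i j : ℕ) : ℝ :=
  Hc u1 u2 Φ c00 c10 c01 c11 α Δx Δy Δt i j
    + Hdx D11m D11p D12m D12p Φ c00 c10 c01 c11 αt Δx Δy Δt i j
    + Hdy D21m D21p D22m D22p Φ c00 c10 c01 c11 αt Δx Δy Δt i j
    + Hs Φ c00 c10 c01 c11 q ct P z1 Δt i j

lemma sqrt3_sq : Real.sqrt 3 * Real.sqrt 3 = 3 := Real.mul_self_sqrt (by norm_num)
lemma sqrt3_nonneg : (0:ℝ) ≤ Real.sqrt 3 := Real.sqrt_nonneg 3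
lemma one_le_sqrt3 : (1:ℝ) ≤ Real.sqrt 3 := by nlinarith [sqrt3_sq, sqrt3_nonneg]

/-- `d·l1 + e·l2 ≤ F/6` from the CFL bounds. -/
lemma pair_cfl {l1 l2 d e F : ℝ} (hl1 : 0 ≤ l1) (hl2 : 0 ≤ l2) (hd : 0 < d) (he : 0 < e)
    (h1 : l1 + l2 ≤ F / (6 * d)) (h2 : l1 + l2 ≤ F / (6 * e)) : d * l1 + e * l2 ≤ F / 6 := by
  rcases le_total d e with h | h
  · have h2' : (l1 + l2) * (6 * e) ≤ F := by
      rw [← le_div_iff₀ (by positivity)]; exact h2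
    nlinarith [mul_le_mul_of_nonneg_right h hl1]
  · have h1' : (l1 + l2) * (6 * d) ≤ F := by
      rw [← le_div_iff₀ (by positivity)]; exact h1
    nlinarith [mul_le_mul_of_nonneg_right h hl2]

/-- Corner coefficient nonnegativity for the convection part. -/
lemma corner_coef4 {x0 x1 y0 y1 F m1 m2 n1 n2 : ℝ}
    (hm1 : 0 ≤ m1) (hm2 : 0 ≤ m2) (hn1 : 0 ≤ n1) (hn2 : 0 ≤ n2)
    (hms : m1 + m2 = 1) (hns : n1 + n2 = 1)
    (h00 : x0 + y0 ≤ F / 6) (h01 : x0 + y1 ≤ F / 6)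
    (h10 : x1 + y0 ≤ F / 6) (h11 : x1 + y1 ≤ F / 6) :
    0 ≤ F / 12 - (m1 * x0 + m2 * x1) / 2 - (n1 * y0 + n2 * y1) / 2 := by
  have f00 := mul_le_mul_of_nonneg_left h00 (mul_nonneg hm1 hn1)
  have f01 := mul_le_mul_of_nonneg_left h01 (mul_nonneg hm1 hn2)
  have f10 := mul_le_mul_of_nonneg_left h10 (mul_nonneg hm2 hn1)
  have f11 := mul_le_mul_of_nonneg_left h11 (mul_nonneg hm2 hn2)
  have hprodF : m1*n1*(F/6) + m1*n2*(F/6) + m2*n1*(F/6) + m2*n2*(F/6) = F/6 := by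
    linear_combination (F/6*m1)*hns + (F/6*m2)*hns + (F/6)*hms
  have hx0 : m1*n1*x0 + m1*n2*x0 = m1*x0 := by linear_combination (m1*x0)*hns
  have hx1 : m2*n1*x1 + m2*n2*x1 = m2*x1 := by linear_combination (m2*x1)*hns
  have hy0 : m1*n1*y0 + m2*n1*y0 = n1*y0 := by linear_combination (n1*y0)*hms
  have hy1 : m1*n2*y1 + m2*n2*y1 = n2*y1 := by linear_combination (n2*y1)*hms
  nlinarith [f00, f01, f10, f11, hprodF, hx0, hx1, hy0, hy1]

lemma combo_le {x y M m1 m2 : ℝ} (hx : x ≤ M) (hy : y ≤ M)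
    (hm1 : 0 ≤ m1) (hm2 : 0 ≤ m2) (hms : m1 + m2 = 1) : x*m1 + y*m2 ≤ M := by
  have e : M*m1 + M*m2 = M := by linear_combination M*hms
  nlinarith [mul_le_mul_of_nonneg_right hx hm1, mul_le_mul_of_nonneg_right hy hm2]

lemma combo_nonneg {x y m1 m2 : ℝ} (hx : 0 ≤ x) (hy : 0 ≤ y)
    (hm1 : 0 ≤ m1) (hm2 : 0 ≤ m2) : 0 ≤ x*m1 + y*m2 :=
  add_nonneg (mul_nonneg hx hm1) (mul_nonneg hy hm2)

/-- Outer (neighbor-cell) coefficient nonnegativity for the diffusion parts. -/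
lemma outer_coef (Dx Dy Dt at_ c e DM EM : ℝ)
    (hDx : 0 < Dx) (hDy : 0 < Dy) (hDt : 0 < Dt)
    (hc0 : 0 ≤ c) (hc : c ≤ DM) (he : -(2*EM) ≤ e) (hEM : 0 ≤ EM)
    (hat : Dy/(2*Dx)*DM + Real.sqrt 3*EM ≤ at_) :
    0 ≤ Dt/Dx*at_/(2*Dy) - Dt/Dx/(4*Dx)*c + Dt/Dx*1/(4*Dy)*e := by
  have h1 : 0 ≤ 2*at_*Dx - Dy*c + Dx*e := by
    have e1 : 2*Dx*(Dy/(2*Dx)*DM) = Dy*DM := by field_simp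
    have e2 : 0 ≤ Dx*(Real.sqrt 3*EM - EM) :=
      mul_nonneg hDx.le (by nlinarith [one_le_sqrt3, hEM])
    have e3 : Dy*c ≤ Dy*DM := mul_le_mul_of_nonneg_left hc hDy.le
    have e4 : Dx*(-(2*EM)) ≤ Dx*e := mul_le_mul_of_nonneg_left he hDx.le
    have e5 : 2*Dx*(Dy/(2*Dx)*DM + Real.sqrt 3*EM) ≤ 2*Dx*at_ :=
      mul_le_mul_of_nonneg_left hat (by positivity)
    nlinarith [e1, e2, e3, e4, e5]
  have heq : Dt/Dx*at_/(2*Dy) - Dt/Dx/(4*Dx)*c + Dt/Dx*1/(4*Dy)*e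
      = Dt*(2*at_*Dx - Dy*c + Dx*e)/(4*Dx^2*Dy) := by
    field_simp; ring
  rw [heq]
  exact div_nonneg (mul_nonneg hDt.le h1) (by positivity)

/-- Inner (own-cell) coefficient nonnegativity for the diffusion parts. -/
lemma inner_coef (Dx Dy Dt F at_ DM EM c c' e : ℝ)
    (hDx : 0 < Dx) (hDy : 0 < Dy) (hDt : 0 < Dt)
    (hc : c ≤ DM) (hc' : 0 ≤ c') (he : -(2*EM) ≤ e)
    (hat : 0 < at_) (hDM : 0 ≤ DM) (hEM : 0 ≤ EM)
    (hCFL : DM*(Dt/Dx^2) + 2*(at_+EM)*(Dt/(Dx*Dy)) < F/12) :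
    0 ≤ F/24 - Dt/Dx/(4*Dx)*c + Dt/Dx/(4*Dx)*c' + Dt/Dx*1/(4*Dy)*e - Dt/Dx*at_/(2*Dy) := by
  have hpos : (0:ℝ) < 12*Dx^2*Dy := by positivity
  have q1 : (12*Dx^2*Dy)*(DM*(Dt/Dx^2)) = 12*DM*Dt*Dy := by field_simp
  have q2 : (12*Dx^2*Dy)*(2*(at_+EM)*(Dt/(Dx*Dy))) = 24*(at_+EM)*Dt*Dx := by field_simp; ring
  have hmul := mul_lt_mul_of_pos_left hCFL hpos
  have hC2 : 12*DM*Dt*Dy + 24*(at_+EM)*Dt*Dx < F*Dx^2*Dy := by nlinarith [q1, q2, hmul]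
  have b1 : 6*Dt*Dy*c ≤ 6*Dt*Dy*DM := mul_le_mul_of_nonneg_left hc (by positivity)
  have b2 : 0 ≤ 6*Dt*Dy*c' := mul_nonneg (by positivity) hc'
  have b3 : 6*Dt*Dx*(-(2*EM)) ≤ 6*Dt*Dx*e := mul_le_mul_of_nonneg_left he (by positivity)
  have b4 : 0 ≤ DM*Dt*Dy := mul_nonneg (mul_nonneg hDM hDt.le) hDy.le
  have b5 : 0 ≤ EM*Dt*Dx := mul_nonneg (mul_nonneg hEM hDt.le) hDx.le
  have b6 : 0 ≤ at_*Dt*Dx := mul_nonneg (mul_nonneg hat.le hDt.le) hDx.le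
  have h1 : 0 ≤ F*Dx^2*Dy - 6*Dt*Dy*c + 6*Dt*Dy*c' + 6*Dt*Dx*e - 12*Dt*Dx*at_ := by
    nlinarith [hC2, b1, b2, b3, b4, b5, b6]
  have heq : F/24 - Dt/Dx/(4*Dx)*c + Dt/Dx/(4*Dx)*c' + Dt/Dx*1/(4*Dy)*e - Dt/Dx*at_/(2*Dy)
      = (F*Dx^2*Dy - 6*Dt*Dy*c + 6*Dt*Dy*c' + 6*Dt*Dx*e - 12*Dt*Dx*at_)/(24*Dx^2*Dy) := by
    field_simp; ring
  rw [heq]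
  exact div_nonneg h1 (by positivity)

lemma sqrt3_le_two : Real.sqrt 3 ≤ 2 := by nlinarith [sqrt3_sq, sqrt3_nonneg]
lemma mu1_nonneg : 0 ≤ mu1 := by rw [mu1]; positivity
lemma mu2_nonneg : 0 ≤ mu2 := by rw [mu2]; linarith [sqrt3_le_two]
lemma mu_sum : mu1 + mu2 = 1 := by rw [mu1, mu2]; ring
lemma ga_zero (a b : ℝ) : ga 0 a b = mu1*a + mu2*b := rfl
lemma ga_one (a b : ℝ) : ga 1 a b = mu2*a + mu1*b := rfl
lemma hGmu : Real.sqrt 3 * (mu1 - mu2) = 1 := by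
  rw [mu1, mu2]; linear_combination sqrt3_sq / 3
/-- Positivity of a single interior Gauss-point contribution to `H^s`. -/
lemma source_pt (Δt z Pv qv ctv Fmin x1 x2 y1 y2 a00 a01 a10 a11 F00 F01 F10 F11 : ℝ)
    (hx1 : 0 ≤ x1) (hx2 : 0 ≤ x2) (hy1 : 0 ≤ y1) (hy2 : 0 ≤ y2)
    (ha00 : 0 ≤ a00) (ha01 : 0 ≤ a01) (ha10 : 0 ≤ a10) (ha11 : 0 ≤ a11)
    (hp00 : 0 ≤ F00) (hp01 : 0 ≤ F01) (hp10 : 0 ≤ F10) (hp11 : 0 ≤ F11)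
    (hF00 : Fmin ≤ F00) (hF01 : Fmin ≤ F01) (hF10 : Fmin ≤ F10) (hF11 : Fmin ≤ F11)
    (hΔt : 0 < Δt) (hz : 0 ≤ z) (hP : 6*Δt*z*max Pv 0 ≤ 1)
    (hct0 : 0 ≤ ctv)
    (hq : qv < 0 → ctv = x1*(y1*a00 + y2*a01) + x2*(y1*a10 + y2*a11) ∧ 6*Δt*(-qv) ≤ Fmin) :
    0 ≤ (x1*(y1*(a00*F00) + y2*(a01*F01)) + x2*(y1*(a10*F10) + y2*(a11*F11)))/3
      + Δt*(ctv*qv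
        - z*(x1*(y1*(a00*F00) + y2*(a01*F01)) + x2*(y1*(a10*F10) + y2*(a11*F11)))*Pv) := by
  set R := x1*(y1*(a00*F00) + y2*(a01*F01)) + x2*(y1*(a10*F10) + y2*(a11*F11)) with hRdef
  have hR0 : 0 ≤ R := by
    apply add_nonneg
    · exact mul_nonneg hx1 (add_nonneg (mul_nonneg hy1 (mul_nonneg ha00 hp00))
        (mul_nonneg hy2 (mul_nonneg ha01 hp01)))
    · exact mul_nonneg hx2 (add_nonneg (mul_nonneg hy1 (mul_nonneg ha10 hp10))
        (mul_nonneg hy2 (mul_nonneg ha11 hp11)))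
  have h1 : Δt*(z*R*Pv) ≤ R/6 := by
    have hzP : z*Pv ≤ z*max Pv 0 := mul_le_mul_of_nonneg_left (le_max_left _ _) hz
    have h6 : Δt*(z*Pv) ≤ 1/6 := by nlinarith [mul_le_mul_of_nonneg_left hzP hΔt.le]
    calc Δt*(z*R*Pv) = R*(Δt*(z*Pv)) := by ring
    _ ≤ R*(1/6) := mul_le_mul_of_nonneg_left h6 hR0
    _ = R/6 := by ring
  have h2 : 0 ≤ R/6 + Δt*(ctv*qv) := by
    rcases lt_or_ge qv 0 with hq0 | hq0
    · obtain ⟨hce, hqb⟩ := hq hq0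
      set C := x1*(y1*a00 + y2*a01) + x2*(y1*a10 + y2*a11) with hCdef
      have hC0 : 0 ≤ C := by
        apply add_nonneg
        · exact mul_nonneg hx1 (add_nonneg (mul_nonneg hy1 ha00) (mul_nonneg hy2 ha01))
        · exact mul_nonneg hx2 (add_nonneg (mul_nonneg hy1 ha10) (mul_nonneg hy2 ha11))
      have hFC : Fmin*C ≤ R := by
        have t1 := mul_le_mul_of_nonneg_left hF00 (mul_nonneg (mul_nonneg hx1 hy1) ha00)
        have t2 := mul_le_mul_of_nonneg_left hF01 (mul_nonneg (mul_nonneg hx1 hy2) ha01)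
        have t3 := mul_le_mul_of_nonneg_left hF10 (mul_nonneg (mul_nonneg hx2 hy1) ha10)
        have t4 := mul_le_mul_of_nonneg_left hF11 (mul_nonneg (mul_nonneg hx2 hy2) ha11)
        rw [hRdef, hCdef]; linarith [t1, t2, t3, t4]
      have hq' : Δt*(-qv) ≤ Fmin/6 := by linarith
      have h5 : C*(Δt*(-qv)) ≤ C*(Fmin/6) := mul_le_mul_of_nonneg_left hq' hC0
      have e1 : Δt*(C*qv) = -(C*(Δt*(-qv))) := by ring
      have e2 : C*(Fmin/6) = (Fmin*C)/6 := by ring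
      rw [hce]
      clear_value R C
      linarith [h5, hFC, e1, e2]
    · have := mul_nonneg hΔt.le (mul_nonneg hct0 hq0)
      linarith [hR0, this]
  linarith [h1, h2]


lemma combo_nonneg' {x y : ℝ} (hx : 0 ≤ x) (hy : 0 ≤ y) : 0 ≤ mu1*x + mu2*y :=
  add_nonneg (mul_nonneg mu1_nonneg hx) (mul_nonneg mu2_nonneg hy)
lemma combo_nonneg'' {x y : ℝ} (hx : 0 ≤ x) (hy : 0 ≤ y) : 0 ≤ mu2*x + mu1*y :=
  add_nonneg (mul_nonneg mu2_nonneg hx) (mul_nonneg mu1_nonneg hy)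

set_option maxHeartbeats 1000000 in
lemma pos_lemma
    (Nx Ny : ℕ) (hNx : 4 ≤ Nx) (hNy : 4 ≤ Ny) (Δx Δy Δt : ℝ)
    (hΔx : 0 < Δx) (hΔy : 0 < Δy) (hΔt : 0 < Δt)
    (Φ c00 c10 c01 c11 : ℕ → ℕ → ℝ)
    (u1 u2 D11m D11p D12m D12p D21m D21p D22m D22p : ℕ → ℕ → Fin 2 → ℝ)
    (q ct P : ℕ → ℕ → Fin 2 → Fin 2 → ℝ) (α αt z1 D11M D12M D22M D21M : ℝ)
    (hΦ : ∀ i j, i ≤ Nx → j ≤ Ny → 0 < Φ i j)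
    (hc : ∀ i j, 1 ≤ i → i ≤ Nx → 1 ≤ j → j ≤ Ny →
      (0 ≤ c00 i j ∧ c00 i j ≤ 1) ∧ (0 ≤ c10 i j ∧ c10 i j ≤ 1) ∧
      (0 ≤ c01 i j ∧ c01 i j ≤ 1) ∧ (0 ≤ c11 i j ∧ c11 i j ≤ 1))
    (hα0 : 0 < α)
    (hα1 : ∀ i j, 1 ≤ i → i ≤ Nx - 1 → 1 ≤ j → j ≤ Ny → ∀ β : Fin 2, u1 i j β < α)
    (hα2 : ∀ i j, 1 ≤ i → i ≤ Nx → 1 ≤ j → j ≤ Ny - 1 → ∀ β : Fin 2, u2 i j β < α)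
    (hCFL0 : ∀ i j, i ≤ Nx → j ≤ Ny → Δt / Δx + Δt / Δy ≤ Φ i j / (6 * α))
    (hCFL1 : ∀ i j, 1 ≤ i → i ≤ Nx - 1 → 1 ≤ j → j ≤ Ny → ∀ β : Fin 2,
      Δt / Δx + Δt / Δy ≤ Φ i (j - 1) / (6 * (α - u1 i j β)) ∧
      Δt / Δx + Δt / Δy ≤ Φ i j / (6 * (α - u1 i j β)))
    (hCFL2 : ∀ i j, 1 ≤ i → i ≤ Nx → 1 ≤ j → j ≤ Ny - 1 → ∀ β : Fin 2,
      Δt / Δx + Δt / Δy ≤ Φ (i - 1) j / (6 * (α - u2 i j β)) ∧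
      Δt / Δx + Δt / Δy ≤ Φ i j / (6 * (α - u2 i j β)))
    (hD11 : ∀ i j, 1 ≤ i → i ≤ Nx - 1 → 1 ≤ j → j ≤ Ny → ∀ β : Fin 2,
      (0 ≤ D11m i j β ∧ D11m i j β ≤ D11M) ∧ (0 ≤ D11p i j β ∧ D11p i j β ≤ D11M))
    (hD12 : ∀ i j, 1 ≤ i → i ≤ Nx - 1 → 1 ≤ j → j ≤ Ny → ∀ β : Fin 2,
      |D12m i j β| ≤ D12M ∧ |D12p i j β| ≤ D12M)
    (hD22 : ∀ i j, 1 ≤ i → i ≤ Nx → 1 ≤ j → j ≤ Ny - 1 → ∀ β : Fin 2,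
      (0 ≤ D22m i j β ∧ D22m i j β ≤ D22M) ∧ (0 ≤ D22p i j β ∧ D22p i j β ≤ D22M))
    (hD21 : ∀ i j, 1 ≤ i → i ≤ Nx → 1 ≤ j → j ≤ Ny - 1 → ∀ β : Fin 2,
      |D21m i j β| ≤ D21M ∧ |D21p i j β| ≤ D21M)
    (hαt0 : 0 < αt)
    (hαt1 : (Δy / (2 * Δx)) * D11M + Real.sqrt 3 * D12M ≤ αt)
    (hαt2 : (Δx / (2 * Δy)) * D22M + Real.sqrt 3 * D21M ≤ αt)
    (hCFL3 : ∀ i j, i ≤ Nx → j ≤ Ny →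
      D11M * (Δt / Δx ^ 2) + 2 * (αt + D12M) * (Δt / (Δx * Δy)) < Φ i j / 12)
    (hCFL4 : ∀ i j, i ≤ Nx → j ≤ Ny →
      D22M * (Δt / Δy ^ 2) + 2 * (αt + D21M) * (Δt / (Δx * Δy)) < Φ i j / 12)
    (hz1 : 0 ≤ z1)
    (hP1 : ∀ i j, 1 ≤ i → i ≤ Nx → 1 ≤ j → j ≤ Ny → ∀ β γ : Fin 2,
      6 * Δt * z1 * max (P i j β γ) 0 ≤ 1)
    (hct : ∀ i j, 1 ≤ i → i ≤ Nx → 1 ≤ j → j ≤ Ny → ∀ β γ : Fin 2,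
      0 ≤ ct i j β γ ∧ ct i j β γ ≤ 1)
    (hq2 : ∀ i j, 1 ≤ i → i ≤ Nx → 1 ≤ j → j ≤ Ny → ∀ β γ : Fin 2,
      q i j β γ < 0 →
        ct i j β γ = cGP c00 c10 c01 c11 i j β γ ∧
        6 * Δt * (-q i j β γ)
          < min (min (Φ (i - 1) (j - 1)) (Φ i (j - 1))) (min (Φ (i - 1) j) (Φ i j))) :
    ∀ i j, 2 ≤ i → i ≤ Nx - 1 → 2 ≤ j → j ≤ Ny - 1 →
      0 ≤ rbarnew u1 u2 D11m D11p D12m D12p D21m D21p D22m D22p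
            Φ c00 c10 c01 c11 q ct P α αt z1 Δx Δy Δt i j := by
  intro i j hi2 hiN hj2 hjN
  have hl1 : (0:ℝ) ≤ Δt/Δx := by positivity
  have hl2 : (0:ℝ) ≤ Δt/Δy := by positivity
  obtain ⟨⟨hA0c, -⟩, ⟨hB0c, -⟩, ⟨hC0c, -⟩, ⟨hD0c, -⟩⟩ :=
    hc i j (by omega) (by omega) (by omega) (by omega)
  obtain ⟨⟨hL00, -⟩, ⟨hL10, -⟩, ⟨hL01, -⟩, ⟨hL11, -⟩⟩ :=
    hc (i-1) j (by omega) (by omega) (by omega) (by omega)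
  obtain ⟨⟨hR00, -⟩, ⟨hR10, -⟩, ⟨hR01, -⟩, ⟨hR11, -⟩⟩ :=
    hc (i+1) j (by omega) (by omega) (by omega) (by omega)
  obtain ⟨⟨hBo00, -⟩, ⟨hBo10, -⟩, ⟨hBo01, -⟩, ⟨hBo11, -⟩⟩ :=
    hc i (j-1) (by omega) (by omega) (by omega) (by omega)
  obtain ⟨⟨hT00, -⟩, ⟨hT10, -⟩, ⟨hT01, -⟩, ⟨hT11, -⟩⟩ :=
    hc i (j+1) (by omega) (by omega) (by omega) (by omega)
  -- velocity gaps
  have hd0 : 0 < α - u1 (i-1) j 0 := by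
    have := hα1 (i-1) j (by omega) (by omega) (by omega) (by omega) 0; linarith
  have hd1 : 0 < α - u1 (i-1) j 1 := by
    have := hα1 (i-1) j (by omega) (by omega) (by omega) (by omega) 1; linarith
  have hdR0 : 0 < α - u1 i j 0 := by
    have := hα1 i j (by omega) (by omega) (by omega) (by omega) 0; linarith
  have hdR1 : 0 < α - u1 i j 1 := by
    have := hα1 i j (by omega) (by omega) (by omega) (by omega) 1; linarith
  have he0 : 0 < α - u2 i (j-1) 0 := by
    have := hα2 i (j-1) (by omega) (by omega) (by omega) (by omega) 0; linarith
  have he1 : 0 < α - u2 i (j-1) 1 := by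
    have := hα2 i (j-1) (by omega) (by omega) (by omega) (by omega) 1; linarith
  have heT0 : 0 < α - u2 i j 0 := by
    have := hα2 i j (by omega) (by omega) (by omega) (by omega) 0; linarith
  have heT1 : 0 < α - u2 i j 1 := by
    have := hα2 i j (by omega) (by omega) (by omega) (by omega) 1; linarith
  -- convection part
  have hHc : 0 ≤ Hc u1 u2 Φ c00 c10 c01 c11 α Δx Δy Δt i j := by
    have hA00 : 0 ≤ Φ (i-1) (j-1)/12
        - (mu1*((α - u1 (i-1) j 0)*(Δt/Δx)) + mu2*((α - u1 (i-1) j 1)*(Δt/Δx)))/2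
        - (mu1*((α - u2 i (j-1) 0)*(Δt/Δy)) + mu2*((α - u2 i (j-1) 1)*(Δt/Δy)))/2 :=
      corner_coef4 mu1_nonneg mu2_nonneg mu1_nonneg mu2_nonneg mu_sum mu_sum
        (pair_cfl hl1 hl2 hd0 he0 (hCFL1 (i-1) j (by omega) (by omega) (by omega) (by omega) 0).1
          (hCFL2 i (j-1) (by omega) (by omega) (by omega) (by omega) 0).1)
        (pair_cfl hl1 hl2 hd0 he1 (hCFL1 (i-1) j (by omega) (by omega) (by omega) (by omega) 0).1
          (hCFL2 i (j-1) (by omega) (by omega) (by omega) (by omega) 1).1)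
        (pair_cfl hl1 hl2 hd1 he0 (hCFL1 (i-1) j (by omega) (by omega) (by omega) (by omega) 1).1
          (hCFL2 i (j-1) (by omega) (by omega) (by omega) (by omega) 0).1)
        (pair_cfl hl1 hl2 hd1 he1 (hCFL1 (i-1) j (by omega) (by omega) (by omega) (by omega) 1).1
          (hCFL2 i (j-1) (by omega) (by omega) (by omega) (by omega) 1).1)
    have hA10 : 0 ≤ Φ i (j-1)/12
        - (mu1*(α*(Δt/Δx)) + mu2*(α*(Δt/Δx)))/2
        - (mu2*((α - u2 i (j-1) 0)*(Δt/Δy)) + mu1*((α - u2 i (j-1) 1)*(Δt/Δy)))/2 :=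
      corner_coef4 mu1_nonneg mu2_nonneg mu2_nonneg mu1_nonneg mu_sum (by rw [add_comm]; exact mu_sum)
        (pair_cfl hl1 hl2 hα0 he0 (hCFL0 i (j-1) (by omega) (by omega))
          (hCFL2 i (j-1) (by omega) (by omega) (by omega) (by omega) 0).2)
        (pair_cfl hl1 hl2 hα0 he1 (hCFL0 i (j-1) (by omega) (by omega))
          (hCFL2 i (j-1) (by omega) (by omega) (by omega) (by omega) 1).2)
        (pair_cfl hl1 hl2 hα0 he0 (hCFL0 i (j-1) (by omega) (by omega))
          (hCFL2 i (j-1) (by omega) (by omega) (by omega) (by omega) 0).2)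
        (pair_cfl hl1 hl2 hα0 he1 (hCFL0 i (j-1) (by omega) (by omega))
          (hCFL2 i (j-1) (by omega) (by omega) (by omega) (by omega) 1).2)
    have hA01 : 0 ≤ Φ (i-1) j/12
        - (mu2*((α - u1 (i-1) j 0)*(Δt/Δx)) + mu1*((α - u1 (i-1) j 1)*(Δt/Δx)))/2
        - (mu1*(α*(Δt/Δy)) + mu2*(α*(Δt/Δy)))/2 :=
      corner_coef4 mu2_nonneg mu1_nonneg mu1_nonneg mu2_nonneg (by rw [add_comm]; exact mu_sum) mu_sum
        (pair_cfl hl1 hl2 hd0 hα0 (hCFL1 (i-1) j (by omega) (by omega) (by omega) (by omega) 0).2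
          (hCFL0 (i-1) j (by omega) (by omega)))
        (pair_cfl hl1 hl2 hd0 hα0 (hCFL1 (i-1) j (by omega) (by omega) (by omega) (by omega) 0).2
          (hCFL0 (i-1) j (by omega) (by omega)))
        (pair_cfl hl1 hl2 hd1 hα0 (hCFL1 (i-1) j (by omega) (by omega) (by omega) (by omega) 1).2
          (hCFL0 (i-1) j (by omega) (by omega)))
        (pair_cfl hl1 hl2 hd1 hα0 (hCFL1 (i-1) j (by omega) (by omega) (by omega) (by omega) 1).2
          (hCFL0 (i-1) j (by omega) (by omega)))
    have hA11 : 0 ≤ Φ i j/12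
        - (mu2*(α*(Δt/Δx)) + mu1*(α*(Δt/Δx)))/2
        - (mu2*(α*(Δt/Δy)) + mu1*(α*(Δt/Δy)))/2 :=
      corner_coef4 mu2_nonneg mu1_nonneg mu2_nonneg mu1_nonneg
        (by rw [add_comm]; exact mu_sum) (by rw [add_comm]; exact mu_sum)
        (pair_cfl hl1 hl2 hα0 hα0 (hCFL0 i j (by omega) (by omega)) (hCFL0 i j (by omega) (by omega)))
        (pair_cfl hl1 hl2 hα0 hα0 (hCFL0 i j (by omega) (by omega)) (hCFL0 i j (by omega) (by omega)))
        (pair_cfl hl1 hl2 hα0 hα0 (hCFL0 i j (by omega) (by omega)) (hCFL0 i j (by omega) (by omega)))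
        (pair_cfl hl1 hl2 hα0 hα0 (hCFL0 i j (by omega) (by omega)) (hCFL0 i j (by omega) (by omega)))
    have pA00 := mul_nonneg hA00 hA0c
    have pA10 := mul_nonneg hA10 hB0c
    have pA01 := mul_nonneg hA01 hC0c
    have pA11 := mul_nonneg hA11 hD0c
    have hI0 : 0 ≤ Δt/Δx*(α*(mu1*c10 (i-1) j + mu2*c11 (i-1) j)) :=
      mul_nonneg hl1 (mul_nonneg hα0.le (combo_nonneg' hL10 hL11))
    have hI1 : 0 ≤ Δt/Δx*(α*(mu2*c10 (i-1) j + mu1*c11 (i-1) j)) :=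
      mul_nonneg hl1 (mul_nonneg hα0.le (combo_nonneg'' hL10 hL11))
    have hI2 : 0 ≤ Δt/Δx*((α - u1 i j 0)*(mu1*c00 (i+1) j + mu2*c01 (i+1) j)) :=
      mul_nonneg hl1 (mul_nonneg hdR0.le (combo_nonneg' hR00 hR01))
    have hI3 : 0 ≤ Δt/Δx*((α - u1 i j 1)*(mu2*c00 (i+1) j + mu1*c01 (i+1) j)) :=
      mul_nonneg hl1 (mul_nonneg hdR1.le (combo_nonneg'' hR00 hR01))
    have hI4 : 0 ≤ Δt/Δy*(α*(mu1*c01 i (j-1) + mu2*c11 i (j-1))) :=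
      mul_nonneg hl2 (mul_nonneg hα0.le (combo_nonneg' hBo01 hBo11))
    have hI5 : 0 ≤ Δt/Δy*(α*(mu2*c01 i (j-1) + mu1*c11 i (j-1))) :=
      mul_nonneg hl2 (mul_nonneg hα0.le (combo_nonneg'' hBo01 hBo11))
    have hI6 : 0 ≤ Δt/Δy*((α - u2 i j 0)*(mu1*c00 i (j+1) + mu2*c10 i (j+1))) :=
      mul_nonneg hl2 (mul_nonneg heT0.le (combo_nonneg' hT00 hT10))
    have hI7 : 0 ≤ Δt/Δy*((α - u2 i j 1)*(mu2*c00 i (j+1) + mu1*c10 i (j+1))) :=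
      mul_nonneg hl2 (mul_nonneg heT1.le (combo_nonneg'' hT00 hT10))
    have e1 : i - 1 + 1 = i := by omega
    have e2 : j - 1 + 1 = j := by omega
    simp only [Hc, rbar, uc1, uc2, cpV, cmV, cpH, cmH, ga_zero, ga_one, Fin.sum_univ_two, e1, e2]
    simp only [mu1, mu2] at pA00 pA10 pA01 pA11 hI0 hI1 hI2 hI3 hI4 hI5 hI6 hI7 ⊢
    linarith [pA00, pA10, pA01, pA11, hI0, hI1, hI2, hI3, hI4, hI5, hI6, hI7]
  -- diffusion bounds
  have hDmR0 := (hD11 i j (by omega) (by omega) (by omega) (by omega) 0).1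
  have hDmR1 := (hD11 i j (by omega) (by omega) (by omega) (by omega) 1).1
  have hDpR0 := (hD11 i j (by omega) (by omega) (by omega) (by omega) 0).2
  have hDpR1 := (hD11 i j (by omega) (by omega) (by omega) (by omega) 1).2
  have hDmL0 := (hD11 (i-1) j (by omega) (by omega) (by omega) (by omega) 0).1
  have hDmL1 := (hD11 (i-1) j (by omega) (by omega) (by omega) (by omega) 1).1
  have hDpL0 := (hD11 (i-1) j (by omega) (by omega) (by omega) (by omega) 0).2
  have hDpL1 := (hD11 (i-1) j (by omega) (by omega) (by omega) (by omega) 1).2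
  have hEmR0 := abs_le.mp (hD12 i j (by omega) (by omega) (by omega) (by omega) 0).1
  have hEmR1 := abs_le.mp (hD12 i j (by omega) (by omega) (by omega) (by omega) 1).1
  have hEpR0 := abs_le.mp (hD12 i j (by omega) (by omega) (by omega) (by omega) 0).2
  have hEpR1 := abs_le.mp (hD12 i j (by omega) (by omega) (by omega) (by omega) 1).2
  have hEmL0 := abs_le.mp (hD12 (i-1) j (by omega) (by omega) (by omega) (by omega) 0).1
  have hEmL1 := abs_le.mp (hD12 (i-1) j (by omega) (by omega) (by omega) (by omega) 1).1
  have hEpL0 := abs_le.mp (hD12 (i-1) j (by omega) (by omega) (by omega) (by omega) 0).2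
  have hEpL1 := abs_le.mp (hD12 (i-1) j (by omega) (by omega) (by omega) (by omega) 1).2
  have hD11M0 : 0 ≤ D11M := le_trans hDmR0.1 hDmR0.2
  have hD12M0 : 0 ≤ D12M := le_trans (abs_nonneg _) (hD12 i j (by omega) (by omega) (by omega) (by omega) 0).1
  have hHdx : 0 ≤ Hdx D11m D11p D12m D12p Φ c00 c10 c01 c11 αt Δx Δy Δt i j := by
    have hca00 : 0 ≤ Φ (i-1) (j-1)/24
        - Δt/Δx/(4*Δx)*(D11m i j 0*mu1 + D11m i j 1*mu2)
        + Δt/Δx/(4*Δx)*(D11p (i-1) j 0*mu1 + D11p (i-1) j 1*mu2)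
        + Δt/Δx*(Real.sqrt 3*(mu1 - mu2))/(4*Δy)*(D12p (i-1) j 0 + D12p (i-1) j 1)
        - Δt/Δx*αt/(2*Δy) := by
      rw [hGmu]
      exact inner_coef Δx Δy Δt _ αt D11M D12M _ _ _ hΔx hΔy hΔt
        (combo_le hDmR0.2 hDmR1.2 mu1_nonneg mu2_nonneg mu_sum)
        (combo_nonneg hDpL0.1 hDpL1.1 mu1_nonneg mu2_nonneg)
        (by linarith [hEpL0.1, hEpL1.1]) hαt0 hD11M0 hD12M0
        (hCFL3 (i-1) (j-1) (by omega) (by omega))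
    have hca01 : 0 ≤ Φ (i-1) j/24
        - Δt/Δx/(4*Δx)*(D11m i j 0*mu2 + D11m i j 1*mu1)
        + Δt/Δx/(4*Δx)*(D11p (i-1) j 0*mu2 + D11p (i-1) j 1*mu1)
        + Δt/Δx*(Real.sqrt 3*(mu1 - mu2))/(4*Δy)*(-(D12p (i-1) j 0 + D12p (i-1) j 1))
        - Δt/Δx*αt/(2*Δy) := by
      rw [hGmu]
      exact inner_coef Δx Δy Δt _ αt D11M D12M _ _ _ hΔx hΔy hΔt
        (combo_le hDmR0.2 hDmR1.2 mu2_nonneg mu1_nonneg (by rw [add_comm]; exact mu_sum))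
        (combo_nonneg hDpL0.1 hDpL1.1 mu2_nonneg mu1_nonneg)
        (by linarith [hEpL0.2, hEpL1.2]) hαt0 hD11M0 hD12M0
        (hCFL3 (i-1) j (by omega) (by omega))
    have hca10 : 0 ≤ Φ i (j-1)/24
        - Δt/Δx/(4*Δx)*(D11p (i-1) j 0*mu1 + D11p (i-1) j 1*mu2)
        + Δt/Δx/(4*Δx)*(D11m i j 0*mu1 + D11m i j 1*mu2)
        + Δt/Δx*(Real.sqrt 3*(mu1 - mu2))/(4*Δy)*(-(D12m i j 0 + D12m i j 1))
        - Δt/Δx*αt/(2*Δy) := by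
      rw [hGmu]
      exact inner_coef Δx Δy Δt _ αt D11M D12M _ _ _ hΔx hΔy hΔt
        (combo_le hDpL0.2 hDpL1.2 mu1_nonneg mu2_nonneg mu_sum)
        (combo_nonneg hDmR0.1 hDmR1.1 mu1_nonneg mu2_nonneg)
        (by linarith [hEmR0.2, hEmR1.2]) hαt0 hD11M0 hD12M0
        (hCFL3 i (j-1) (by omega) (by omega))
    have hca11 : 0 ≤ Φ i j/24
        - Δt/Δx/(4*Δx)*(D11p (i-1) j 0*mu2 + D11p (i-1) j 1*mu1)
        + Δt/Δx/(4*Δx)*(D11m i j 0*mu2 + D11m i j 1*mu1)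
        + Δt/Δx*(Real.sqrt 3*(mu1 - mu2))/(4*Δy)*(D12m i j 0 + D12m i j 1)
        - Δt/Δx*αt/(2*Δy) := by
      rw [hGmu]
      exact inner_coef Δx Δy Δt _ αt D11M D12M _ _ _ hΔx hΔy hΔt
        (combo_le hDpL0.2 hDpL1.2 mu2_nonneg mu1_nonneg (by rw [add_comm]; exact mu_sum))
        (combo_nonneg hDmR0.1 hDmR1.1 mu2_nonneg mu1_nonneg)
        (by linarith [hEmR0.1, hEmR1.1]) hαt0 hD11M0 hD12M0
        (hCFL3 i j (by omega) (by omega))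
    have hcr00 : 0 ≤ Δt/Δx*αt/(2*Δy)
        - Δt/Δx/(4*Δx)*(D11p i j 0*mu1 + D11p i j 1*mu2)
        + Δt/Δx*(Real.sqrt 3*(mu1 - mu2))/(4*Δy)*(-(D12p i j 0 + D12p i j 1)) := by
      rw [hGmu]
      exact outer_coef Δx Δy Δt αt _ _ D11M D12M hΔx hΔy hΔt
        (combo_nonneg hDpR0.1 hDpR1.1 mu1_nonneg mu2_nonneg)
        (combo_le hDpR0.2 hDpR1.2 mu1_nonneg mu2_nonneg mu_sum)
        (by linarith [hEpR0.1, hEpR1.1]) hD12M0 hαt1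
    have hcr01 : 0 ≤ Δt/Δx*αt/(2*Δy)
        - Δt/Δx/(4*Δx)*(D11p i j 0*mu2 + D11p i j 1*mu1)
        + Δt/Δx*(Real.sqrt 3*(mu1 - mu2))/(4*Δy)*(D12p i j 0 + D12p i j 1) := by
      rw [hGmu]
      exact outer_coef Δx Δy Δt αt _ _ D11M D12M hΔx hΔy hΔt
        (combo_nonneg hDpR0.1 hDpR1.1 mu2_nonneg mu1_nonneg)
        (combo_le hDpR0.2 hDpR1.2 mu2_nonneg mu1_nonneg (by rw [add_comm]; exact mu_sum))
        (by linarith [hEpR0.2, hEpR1.2]) hD12M0 hαt1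
    have hcl10 : 0 ≤ Δt/Δx*αt/(2*Δy)
        - Δt/Δx/(4*Δx)*(D11m (i-1) j 0*mu1 + D11m (i-1) j 1*mu2)
        + Δt/Δx*(Real.sqrt 3*(mu1 - mu2))/(4*Δy)*(D12m (i-1) j 0 + D12m (i-1) j 1) := by
      rw [hGmu]
      exact outer_coef Δx Δy Δt αt _ _ D11M D12M hΔx hΔy hΔt
        (combo_nonneg hDmL0.1 hDmL1.1 mu1_nonneg mu2_nonneg)
        (combo_le hDmL0.2 hDmL1.2 mu1_nonneg mu2_nonneg mu_sum)
        (by linarith [hEmL0.1, hEmL1.1]) hD12M0 hαt1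
    have hcl11 : 0 ≤ Δt/Δx*αt/(2*Δy)
        - Δt/Δx/(4*Δx)*(D11m (i-1) j 0*mu2 + D11m (i-1) j 1*mu1)
        + Δt/Δx*(Real.sqrt 3*(mu1 - mu2))/(4*Δy)*(-(D12m (i-1) j 0 + D12m (i-1) j 1)) := by
      rw [hGmu]
      exact outer_coef Δx Δy Δt αt _ _ D11M D12M hΔx hΔy hΔt
        (combo_nonneg hDmL0.1 hDmL1.1 mu2_nonneg mu1_nonneg)
        (combo_le hDmL0.2 hDmL1.2 mu2_nonneg mu1_nonneg (by rw [add_comm]; exact mu_sum))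
        (by linarith [hEmL0.2, hEmL1.2]) hD12M0 hαt1
    have hcr10 : 0 ≤ Δt/Δx/(4*Δx)*(D11p i j 0*mu1 + D11p i j 1*mu2) :=
      mul_nonneg (by positivity) (combo_nonneg hDpR0.1 hDpR1.1 mu1_nonneg mu2_nonneg)
    have hcr11 : 0 ≤ Δt/Δx/(4*Δx)*(D11p i j 0*mu2 + D11p i j 1*mu1) :=
      mul_nonneg (by positivity) (combo_nonneg hDpR0.1 hDpR1.1 mu2_nonneg mu1_nonneg)
    have hcl00 : 0 ≤ Δt/Δx/(4*Δx)*(D11m (i-1) j 0*mu1 + D11m (i-1) j 1*mu2) :=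
      mul_nonneg (by positivity) (combo_nonneg hDmL0.1 hDmL1.1 mu1_nonneg mu2_nonneg)
    have hcl01 : 0 ≤ Δt/Δx/(4*Δx)*(D11m (i-1) j 0*mu2 + D11m (i-1) j 1*mu1) :=
      mul_nonneg (by positivity) (combo_nonneg hDmL0.1 hDmL1.1 mu2_nonneg mu1_nonneg)
    have p0 := mul_nonneg hca00 hA0c
    have p1 := mul_nonneg hca01 hC0c
    have p2 := mul_nonneg hca10 hB0c
    have p3 := mul_nonneg hca11 hD0c
    have p4 := mul_nonneg hcr00 hR00
    have p5 := mul_nonneg hcr01 hR01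
    have p6 := mul_nonneg hcr10 hR10
    have p7 := mul_nonneg hcr11 hR11
    have p8 := mul_nonneg hcl10 hL10
    have p9 := mul_nonneg hcl11 hL11
    have p10 := mul_nonneg hcl00 hL00
    have p11 := mul_nonneg hcl01 hL01
    have e1 : i - 1 + 1 = i := by omega
    have e3 : i - 1 - 1 + 1 = i - 1 := by omega
    have hEQ : Hdx D11m D11p D12m D12p Φ c00 c10 c01 c11 αt Δx Δy Δt i j
        = (Φ (i-1) (j-1)/24
        - Δt/Δx/(4*Δx)*(D11m i j 0*mu1 + D11m i j 1*mu2)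
        + Δt/Δx/(4*Δx)*(D11p (i-1) j 0*mu1 + D11p (i-1) j 1*mu2)
        + Δt/Δx*(Real.sqrt 3*(mu1 - mu2))/(4*Δy)*(D12p (i-1) j 0 + D12p (i-1) j 1)
        - Δt/Δx*αt/(2*Δy)) * (c00 i j) + (Φ (i-1) j/24
        - Δt/Δx/(4*Δx)*(D11m i j 0*mu2 + D11m i j 1*mu1)
        + Δt/Δx/(4*Δx)*(D11p (i-1) j 0*mu2 + D11p (i-1) j 1*mu1)
        + Δt/Δx*(Real.sqrt 3*(mu1 - mu2))/(4*Δy)*(-(D12p (i-1) j 0 + D12p (i-1) j 1))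
        - Δt/Δx*αt/(2*Δy)) * (c01 i j) + (Φ i (j-1)/24
        - Δt/Δx/(4*Δx)*(D11p (i-1) j 0*mu1 + D11p (i-1) j 1*mu2)
        + Δt/Δx/(4*Δx)*(D11m i j 0*mu1 + D11m i j 1*mu2)
        + Δt/Δx*(Real.sqrt 3*(mu1 - mu2))/(4*Δy)*(-(D12m i j 0 + D12m i j 1))
        - Δt/Δx*αt/(2*Δy)) * (c10 i j) + (Φ i j/24
        - Δt/Δx/(4*Δx)*(D11p (i-1) j 0*mu2 + D11p (i-1) j 1*mu1)
        + Δt/Δx/(4*Δx)*(D11m i j 0*mu2 + D11m i j 1*mu1)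
        + Δt/Δx*(Real.sqrt 3*(mu1 - mu2))/(4*Δy)*(D12m i j 0 + D12m i j 1)
        - Δt/Δx*αt/(2*Δy)) * (c11 i j) + (Δt/Δx*αt/(2*Δy)
        - Δt/Δx/(4*Δx)*(D11p i j 0*mu1 + D11p i j 1*mu2)
        + Δt/Δx*(Real.sqrt 3*(mu1 - mu2))/(4*Δy)*(-(D12p i j 0 + D12p i j 1))) * (c00 (i+1) j) + (Δt/Δx*αt/(2*Δy)
        - Δt/Δx/(4*Δx)*(D11p i j 0*mu2 + D11p i j 1*mu1)
        + Δt/Δx*(Real.sqrt 3*(mu1 - mu2))/(4*Δy)*(D12p i j 0 + D12p i j 1)) * (c01 (i+1) j) + (Δt/Δx/(4*Δx)*(D11p i j 0*mu1 + D11p i j 1*mu2)) * (c10 (i+1) j) + (Δt/Δx/(4*Δx)*(D11p i j 0*mu2 + D11p i j 1*mu1)) * (c11 (i+1) j) + (Δt/Δx*αt/(2*Δy)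
        - Δt/Δx/(4*Δx)*(D11m (i-1) j 0*mu1 + D11m (i-1) j 1*mu2)
        + Δt/Δx*(Real.sqrt 3*(mu1 - mu2))/(4*Δy)*(D12m (i-1) j 0 + D12m (i-1) j 1)) * (c10 (i-1) j) + (Δt/Δx*αt/(2*Δy)
        - Δt/Δx/(4*Δx)*(D11m (i-1) j 0*mu2 + D11m (i-1) j 1*mu1)
        + Δt/Δx*(Real.sqrt 3*(mu1 - mu2))/(4*Δy)*(-(D12m (i-1) j 0 + D12m (i-1) j 1))) * (c11 (i-1) j) + (Δt/Δx/(4*Δx)*(D11m (i-1) j 0*mu1 + D11m (i-1) j 1*mu2)) * (c00 (i-1) j) + (Δt/Δx/(4*Δx)*(D11m (i-1) j 0*mu2 + D11m (i-1) j 1*mu1)) * (c01 (i-1) j) := by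
      simp only [Hdx, rbar, GxV, cxmV, cxpV, cymV, cypV, jumpV, cpV, cmV, ga_zero, ga_one,
        Fin.sum_univ_two, e1, e3]
      rw [mu1, mu2]
      ring
    rw [hEQ]
    exact add_nonneg (add_nonneg (add_nonneg (add_nonneg (add_nonneg (add_nonneg (add_nonneg (add_nonneg (add_nonneg (add_nonneg (add_nonneg p0 p1) p2) p3) p4) p5) p6) p7) p8) p9) p10) p11
  -- y-diffusion bounds
  have hGmR0 := (hD22 i j (by omega) (by omega) (by omega) (by omega) 0).1
  have hGmR1 := (hD22 i j (by omega) (by omega) (by omega) (by omega) 1).1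
  have hGpR0 := (hD22 i j (by omega) (by omega) (by omega) (by omega) 0).2
  have hGpR1 := (hD22 i j (by omega) (by omega) (by omega) (by omega) 1).2
  have hGmL0 := (hD22 i (j-1) (by omega) (by omega) (by omega) (by omega) 0).1
  have hGmL1 := (hD22 i (j-1) (by omega) (by omega) (by omega) (by omega) 1).1
  have hGpL0 := (hD22 i (j-1) (by omega) (by omega) (by omega) (by omega) 0).2
  have hGpL1 := (hD22 i (j-1) (by omega) (by omega) (by omega) (by omega) 1).2
  have hHmR0 := abs_le.mp (hD21 i j (by omega) (by omega) (by omega) (by omega) 0).1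
  have hHmR1 := abs_le.mp (hD21 i j (by omega) (by omega) (by omega) (by omega) 1).1
  have hHpR0 := abs_le.mp (hD21 i j (by omega) (by omega) (by omega) (by omega) 0).2
  have hHpR1 := abs_le.mp (hD21 i j (by omega) (by omega) (by omega) (by omega) 1).2
  have hHmL0 := abs_le.mp (hD21 i (j-1) (by omega) (by omega) (by omega) (by omega) 0).1
  have hHmL1 := abs_le.mp (hD21 i (j-1) (by omega) (by omega) (by omega) (by omega) 1).1
  have hHpL0 := abs_le.mp (hD21 i (j-1) (by omega) (by omega) (by omega) (by omega) 0).2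
  have hHpL1 := abs_le.mp (hD21 i (j-1) (by omega) (by omega) (by omega) (by omega) 1).2
  have hD22M0 : 0 ≤ D22M := le_trans hGmR0.1 hGmR0.2
  have hD21M0 : 0 ≤ D21M := le_trans (abs_nonneg _)
    (hD21 i j (by omega) (by omega) (by omega) (by omega) 0).1
  have hHdy : 0 ≤ Hdy D21m D21p D22m D22p Φ c00 c10 c01 c11 αt Δx Δy Δt i j := by
    have hya00 : 0 ≤ Φ (i-1) (j-1)/24
        - Δt/Δy/(4*Δy)*(D22m i j 0*mu1 + D22m i j 1*mu2)
        + Δt/Δy/(4*Δy)*(D22p i (j-1) 0*mu1 + D22p i (j-1) 1*mu2)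
        + Δt/Δy*(Real.sqrt 3*(mu1 - mu2))/(4*Δx)*(D21p i (j-1) 0 + D21p i (j-1) 1)
        - Δt/Δy*αt/(2*Δx) := by
      rw [hGmu]
      exact inner_coef Δy Δx Δt _ αt D22M D21M _ _ _ hΔy hΔx hΔt
        (combo_le hGmR0.2 hGmR1.2 mu1_nonneg mu2_nonneg mu_sum)
        (combo_nonneg hGpL0.1 hGpL1.1 mu1_nonneg mu2_nonneg)
        (by linarith [hHpL0.1, hHpL1.1]) hαt0 hD22M0 hD21M0
        (by rw [mul_comm Δy Δx]; exact hCFL4 (i-1) (j-1) (by omega) (by omega))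
    have hya10 : 0 ≤ Φ i (j-1)/24
        - Δt/Δy/(4*Δy)*(D22m i j 0*mu2 + D22m i j 1*mu1)
        + Δt/Δy/(4*Δy)*(D22p i (j-1) 0*mu2 + D22p i (j-1) 1*mu1)
        + Δt/Δy*(Real.sqrt 3*(mu1 - mu2))/(4*Δx)*(-(D21p i (j-1) 0 + D21p i (j-1) 1))
        - Δt/Δy*αt/(2*Δx) := by
      rw [hGmu]
      exact inner_coef Δy Δx Δt _ αt D22M D21M _ _ _ hΔy hΔx hΔt
        (combo_le hGmR0.2 hGmR1.2 mu2_nonneg mu1_nonneg (by rw [add_comm]; exact mu_sum))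
        (combo_nonneg hGpL0.1 hGpL1.1 mu2_nonneg mu1_nonneg)
        (by linarith [hHpL0.2, hHpL1.2]) hαt0 hD22M0 hD21M0
        (by rw [mul_comm Δy Δx]; exact hCFL4 i (j-1) (by omega) (by omega))
    have hya01 : 0 ≤ Φ (i-1) j/24
        - Δt/Δy/(4*Δy)*(D22p i (j-1) 0*mu1 + D22p i (j-1) 1*mu2)
        + Δt/Δy/(4*Δy)*(D22m i j 0*mu1 + D22m i j 1*mu2)
        + Δt/Δy*(Real.sqrt 3*(mu1 - mu2))/(4*Δx)*(-(D21m i j 0 + D21m i j 1))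
        - Δt/Δy*αt/(2*Δx) := by
      rw [hGmu]
      exact inner_coef Δy Δx Δt _ αt D22M D21M _ _ _ hΔy hΔx hΔt
        (combo_le hGpL0.2 hGpL1.2 mu1_nonneg mu2_nonneg mu_sum)
        (combo_nonneg hGmR0.1 hGmR1.1 mu1_nonneg mu2_nonneg)
        (by linarith [hHmR0.2, hHmR1.2]) hαt0 hD22M0 hD21M0
        (by rw [mul_comm Δy Δx]; exact hCFL4 (i-1) j (by omega) (by omega))
    have hya11 : 0 ≤ Φ i j/24
        - Δt/Δy/(4*Δy)*(D22p i (j-1) 0*mu2 + D22p i (j-1) 1*mu1)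
        + Δt/Δy/(4*Δy)*(D22m i j 0*mu2 + D22m i j 1*mu1)
        + Δt/Δy*(Real.sqrt 3*(mu1 - mu2))/(4*Δx)*(D21m i j 0 + D21m i j 1)
        - Δt/Δy*αt/(2*Δx) := by
      rw [hGmu]
      exact inner_coef Δy Δx Δt _ αt D22M D21M _ _ _ hΔy hΔx hΔt
        (combo_le hGpL0.2 hGpL1.2 mu2_nonneg mu1_nonneg (by rw [add_comm]; exact mu_sum))
        (combo_nonneg hGmR0.1 hGmR1.1 mu2_nonneg mu1_nonneg)
        (by linarith [hHmR0.1, hHmR1.1]) hαt0 hD22M0 hD21M0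
        (by rw [mul_comm Δy Δx]; exact hCFL4 i j (by omega) (by omega))
    have hyt00 : 0 ≤ Δt/Δy*αt/(2*Δx)
        - Δt/Δy/(4*Δy)*(D22p i j 0*mu1 + D22p i j 1*mu2)
        + Δt/Δy*(Real.sqrt 3*(mu1 - mu2))/(4*Δx)*(-(D21p i j 0 + D21p i j 1)) := by
      rw [hGmu]
      exact outer_coef Δy Δx Δt αt _ _ D22M D21M hΔy hΔx hΔt
        (combo_nonneg hGpR0.1 hGpR1.1 mu1_nonneg mu2_nonneg)
        (combo_le hGpR0.2 hGpR1.2 mu1_nonneg mu2_nonneg mu_sum)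
        (by linarith [hHpR0.2, hHpR1.2]) hD21M0 hαt2
    have hyt10 : 0 ≤ Δt/Δy*αt/(2*Δx)
        - Δt/Δy/(4*Δy)*(D22p i j 0*mu2 + D22p i j 1*mu1)
        + Δt/Δy*(Real.sqrt 3*(mu1 - mu2))/(4*Δx)*(D21p i j 0 + D21p i j 1) := by
      rw [hGmu]
      exact outer_coef Δy Δx Δt αt _ _ D22M D21M hΔy hΔx hΔt
        (combo_nonneg hGpR0.1 hGpR1.1 mu2_nonneg mu1_nonneg)
        (combo_le hGpR0.2 hGpR1.2 mu2_nonneg mu1_nonneg (by rw [add_comm]; exact mu_sum))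
        (by linarith [hHpR0.1, hHpR1.1]) hD21M0 hαt2
    have hyb01 : 0 ≤ Δt/Δy*αt/(2*Δx)
        - Δt/Δy/(4*Δy)*(D22m i (j-1) 0*mu1 + D22m i (j-1) 1*mu2)
        + Δt/Δy*(Real.sqrt 3*(mu1 - mu2))/(4*Δx)*(D21m i (j-1) 0 + D21m i (j-1) 1) := by
      rw [hGmu]
      exact outer_coef Δy Δx Δt αt _ _ D22M D21M hΔy hΔx hΔt
        (combo_nonneg hGmL0.1 hGmL1.1 mu1_nonneg mu2_nonneg)
        (combo_le hGmL0.2 hGmL1.2 mu1_nonneg mu2_nonneg mu_sum)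
        (by linarith [hHmL0.1, hHmL1.1]) hD21M0 hαt2
    have hyb11 : 0 ≤ Δt/Δy*αt/(2*Δx)
        - Δt/Δy/(4*Δy)*(D22m i (j-1) 0*mu2 + D22m i (j-1) 1*mu1)
        + Δt/Δy*(Real.sqrt 3*(mu1 - mu2))/(4*Δx)*(-(D21m i (j-1) 0 + D21m i (j-1) 1)) := by
      rw [hGmu]
      exact outer_coef Δy Δx Δt αt _ _ D22M D21M hΔy hΔx hΔt
        (combo_nonneg hGmL0.1 hGmL1.1 mu2_nonneg mu1_nonneg)
        (combo_le hGmL0.2 hGmL1.2 mu2_nonneg mu1_nonneg (by rw [add_comm]; exact mu_sum))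
        (by linarith [hHmL0.2, hHmL1.2]) hD21M0 hαt2
    have hyt01 : 0 ≤ Δt/Δy/(4*Δy)*(D22p i j 0*mu1 + D22p i j 1*mu2) :=
      mul_nonneg (by positivity) (combo_nonneg hGpR0.1 hGpR1.1 mu1_nonneg mu2_nonneg)
    have hyt11 : 0 ≤ Δt/Δy/(4*Δy)*(D22p i j 0*mu2 + D22p i j 1*mu1) :=
      mul_nonneg (by positivity) (combo_nonneg hGpR0.1 hGpR1.1 mu2_nonneg mu1_nonneg)
    have hyb00 : 0 ≤ Δt/Δy/(4*Δy)*(D22m i (j-1) 0*mu1 + D22m i (j-1) 1*mu2) :=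
      mul_nonneg (by positivity) (combo_nonneg hGmL0.1 hGmL1.1 mu1_nonneg mu2_nonneg)
    have hyb10 : 0 ≤ Δt/Δy/(4*Δy)*(D22m i (j-1) 0*mu2 + D22m i (j-1) 1*mu1) :=
      mul_nonneg (by positivity) (combo_nonneg hGmL0.1 hGmL1.1 mu2_nonneg mu1_nonneg)
    have py0 := mul_nonneg hya00 hA0c
    have py1 := mul_nonneg hya10 hB0c
    have py2 := mul_nonneg hya01 hC0c
    have py3 := mul_nonneg hya11 hD0c
    have py4 := mul_nonneg hyt00 hT00
    have py5 := mul_nonneg hyt10 hT10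
    have py6 := mul_nonneg hyt01 hT01
    have py7 := mul_nonneg hyt11 hT11
    have py8 := mul_nonneg hyb01 hBo01
    have py9 := mul_nonneg hyb11 hBo11
    have py10 := mul_nonneg hyb00 hBo00
    have py11 := mul_nonneg hyb10 hBo10
    have e2 : j - 1 + 1 = j := by omega
    have e4 : j - 1 - 1 + 1 = j - 1 := by omega
    have hEQ : Hdy D21m D21p D22m D22p Φ c00 c10 c01 c11 αt Δx Δy Δt i j
        = (Φ (i-1) (j-1)/24
        - Δt/Δy/(4*Δy)*(D22m i j 0*mu1 + D22m i j 1*mu2)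
        + Δt/Δy/(4*Δy)*(D22p i (j-1) 0*mu1 + D22p i (j-1) 1*mu2)
        + Δt/Δy*(Real.sqrt 3*(mu1 - mu2))/(4*Δx)*(D21p i (j-1) 0 + D21p i (j-1) 1)
        - Δt/Δy*αt/(2*Δx)) * (c00 i j) + (Φ i (j-1)/24
        - Δt/Δy/(4*Δy)*(D22m i j 0*mu2 + D22m i j 1*mu1)
        + Δt/Δy/(4*Δy)*(D22p i (j-1) 0*mu2 + D22p i (j-1) 1*mu1)
        + Δt/Δy*(Real.sqrt 3*(mu1 - mu2))/(4*Δx)*(-(D21p i (j-1) 0 + D21p i (j-1) 1))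
        - Δt/Δy*αt/(2*Δx)) * (c10 i j) + (Φ (i-1) j/24
        - Δt/Δy/(4*Δy)*(D22p i (j-1) 0*mu1 + D22p i (j-1) 1*mu2)
        + Δt/Δy/(4*Δy)*(D22m i j 0*mu1 + D22m i j 1*mu2)
        + Δt/Δy*(Real.sqrt 3*(mu1 - mu2))/(4*Δx)*(-(D21m i j 0 + D21m i j 1))
        - Δt/Δy*αt/(2*Δx)) * (c01 i j) + (Φ i j/24
        - Δt/Δy/(4*Δy)*(D22p i (j-1) 0*mu2 + D22p i (j-1) 1*mu1)
        + Δt/Δy/(4*Δy)*(D22m i j 0*mu2 + D22m i j 1*mu1)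
        + Δt/Δy*(Real.sqrt 3*(mu1 - mu2))/(4*Δx)*(D21m i j 0 + D21m i j 1)
        - Δt/Δy*αt/(2*Δx)) * (c11 i j) + (Δt/Δy*αt/(2*Δx)
        - Δt/Δy/(4*Δy)*(D22p i j 0*mu1 + D22p i j 1*mu2)
        + Δt/Δy*(Real.sqrt 3*(mu1 - mu2))/(4*Δx)*(-(D21p i j 0 + D21p i j 1))) * (c00 i (j+1)) + (Δt/Δy*αt/(2*Δx)
        - Δt/Δy/(4*Δy)*(D22p i j 0*mu2 + D22p i j 1*mu1)
        + Δt/Δy*(Real.sqrt 3*(mu1 - mu2))/(4*Δx)*(D21p i j 0 + D21p i j 1)) * (c10 i (j+1)) + (Δt/Δy/(4*Δy)*(D22p i j 0*mu1 + D22p i j 1*mu2)) * (c01 i (j+1)) + (Δt/Δy/(4*Δy)*(D22p i j 0*mu2 + D22p i j 1*mu1)) * (c11 i (j+1)) + (Δt/Δy*αt/(2*Δx)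
        - Δt/Δy/(4*Δy)*(D22m i (j-1) 0*mu1 + D22m i (j-1) 1*mu2)
        + Δt/Δy*(Real.sqrt 3*(mu1 - mu2))/(4*Δx)*(D21m i (j-1) 0 + D21m i (j-1) 1)) * (c01 i (j-1)) + (Δt/Δy*αt/(2*Δx)
        - Δt/Δy/(4*Δy)*(D22m i (j-1) 0*mu2 + D22m i (j-1) 1*mu1)
        + Δt/Δy*(Real.sqrt 3*(mu1 - mu2))/(4*Δx)*(-(D21m i (j-1) 0 + D21m i (j-1) 1))) * (c11 i (j-1)) + (Δt/Δy/(4*Δy)*(D22m i (j-1) 0*mu1 + D22m i (j-1) 1*mu2)) * (c00 i (j-1)) + (Δt/Δy/(4*Δy)*(D22m i (j-1) 0*mu2 + D22m i (j-1) 1*mu1)) * (c10 i (j-1)) := by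
      simp only [Hdy, rbar, GyH, cymH, cypH, cxmH, cxpH, jumpH, cpH, cmH, ga_zero, ga_one,
        Fin.sum_univ_two, e2, e4]
      rw [mu1, mu2]
      ring
    rw [hEQ]
    exact add_nonneg (add_nonneg (add_nonneg (add_nonneg (add_nonneg (add_nonneg (add_nonneg (add_nonneg (add_nonneg (add_nonneg (add_nonneg py0 py1) py2) py3) py4) py5) py6) py7) py8) py9) py10) py11
  have hP00f := hΦ (i-1) (j-1) (by omega) (by omega)
  have hP10f := hΦ i (j-1) (by omega) (by omega)
  have hP01f := hΦ (i-1) j (by omega) (by omega)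
  have hP11f := hΦ i j (by omega) (by omega)
  have hHs : 0 ≤ Hs Φ c00 c10 c01 c11 q ct P z1 Δt i j := by
    have hB00 : 0 ≤ (mu1*(mu1*(c00 i j*Φ (i-1) (j-1)) + mu2*(c01 i j*Φ (i-1) j)) + mu2*(mu1*(c10 i j*Φ i (j-1)) + mu2*(c11 i j*Φ i j)))/3 + Δt*(ct i j 0 0*q i j 0 0 - z1*(mu1*(mu1*(c00 i j*Φ (i-1) (j-1)) + mu2*(c01 i j*Φ (i-1) j)) + mu2*(mu1*(c10 i j*Φ i (j-1)) + mu2*(c11 i j*Φ i j)))*P i j 0 0) := by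
      refine source_pt Δt z1 (P i j 0 0) (q i j 0 0) (ct i j 0 0) _ mu1 mu2 mu1 mu2
        (c00 i j) (c01 i j) (c10 i j) (c11 i j) _ _ _ _
        mu1_nonneg mu2_nonneg mu1_nonneg mu2_nonneg hA0c hC0c hB0c hD0c
        hP00f.le hP01f.le hP10f.le hP11f.le
        (le_trans (min_le_left _ _) (min_le_left _ _))
        (le_trans (min_le_right _ _) (min_le_left _ _))
        (le_trans (min_le_left _ _) (min_le_right _ _))
        (le_trans (min_le_right _ _) (min_le_right _ _))
        hΔt hz1 (hP1 i j (by omega) (by omega) (by omega) (by omega) 0 0)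
        (hct i j (by omega) (by omega) (by omega) (by omega) 0 0).1
        (fun hlt => ?_)
      obtain ⟨hce, hmin⟩ := hq2 i j (by omega) (by omega) (by omega) (by omega) 0 0 hlt
      refine ⟨?_, le_of_lt hmin⟩
      rw [hce]
      simp only [cGP, ga_zero, ga_one]
    have hB01 : 0 ≤ (mu1*(mu2*(c00 i j*Φ (i-1) (j-1)) + mu1*(c01 i j*Φ (i-1) j)) + mu2*(mu2*(c10 i j*Φ i (j-1)) + mu1*(c11 i j*Φ i j)))/3 + Δt*(ct i j 0 1*q i j 0 1 - z1*(mu1*(mu2*(c00 i j*Φ (i-1) (j-1)) + mu1*(c01 i j*Φ (i-1) j)) + mu2*(mu2*(c10 i j*Φ i (j-1)) + mu1*(c11 i j*Φ i j)))*P i j 0 1) := by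
      refine source_pt Δt z1 (P i j 0 1) (q i j 0 1) (ct i j 0 1) _ mu1 mu2 mu2 mu1
        (c00 i j) (c01 i j) (c10 i j) (c11 i j) _ _ _ _
        mu1_nonneg mu2_nonneg mu2_nonneg mu1_nonneg hA0c hC0c hB0c hD0c
        hP00f.le hP01f.le hP10f.le hP11f.le
        (le_trans (min_le_left _ _) (min_le_left _ _))
        (le_trans (min_le_right _ _) (min_le_left _ _))
        (le_trans (min_le_left _ _) (min_le_right _ _))
        (le_trans (min_le_right _ _) (min_le_right _ _))
        hΔt hz1 (hP1 i j (by omega) (by omega) (by omega) (by omega) 0 1)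
        (hct i j (by omega) (by omega) (by omega) (by omega) 0 1).1
        (fun hlt => ?_)
      obtain ⟨hce, hmin⟩ := hq2 i j (by omega) (by omega) (by omega) (by omega) 0 1 hlt
      refine ⟨?_, le_of_lt hmin⟩
      rw [hce]
      simp only [cGP, ga_zero, ga_one]
    have hB10 : 0 ≤ (mu2*(mu1*(c00 i j*Φ (i-1) (j-1)) + mu2*(c01 i j*Φ (i-1) j)) + mu1*(mu1*(c10 i j*Φ i (j-1)) + mu2*(c11 i j*Φ i j)))/3 + Δt*(ct i j 1 0*q i j 1 0 - z1*(mu2*(mu1*(c00 i j*Φ (i-1) (j-1)) + mu2*(c01 i j*Φ (i-1) j)) + mu1*(mu1*(c10 i j*Φ i (j-1)) + mu2*(c11 i j*Φ i j)))*P i j 1 0) := by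
      refine source_pt Δt z1 (P i j 1 0) (q i j 1 0) (ct i j 1 0) _ mu2 mu1 mu1 mu2
        (c00 i j) (c01 i j) (c10 i j) (c11 i j) _ _ _ _
        mu2_nonneg mu1_nonneg mu1_nonneg mu2_nonneg hA0c hC0c hB0c hD0c
        hP00f.le hP01f.le hP10f.le hP11f.le
        (le_trans (min_le_left _ _) (min_le_left _ _))
        (le_trans (min_le_right _ _) (min_le_left _ _))
        (le_trans (min_le_left _ _) (min_le_right _ _))
        (le_trans (min_le_right _ _) (min_le_right _ _))
        hΔt hz1 (hP1 i j (by omega) (by omega) (by omega) (by omega) 1 0)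
        (hct i j (by omega) (by omega) (by omega) (by omega) 1 0).1
        (fun hlt => ?_)
      obtain ⟨hce, hmin⟩ := hq2 i j (by omega) (by omega) (by omega) (by omega) 1 0 hlt
      refine ⟨?_, le_of_lt hmin⟩
      rw [hce]
      simp only [cGP, ga_zero, ga_one]
    have hB11 : 0 ≤ (mu2*(mu2*(c00 i j*Φ (i-1) (j-1)) + mu1*(c01 i j*Φ (i-1) j)) + mu1*(mu2*(c10 i j*Φ i (j-1)) + mu1*(c11 i j*Φ i j)))/3 + Δt*(ct i j 1 1*q i j 1 1 - z1*(mu2*(mu2*(c00 i j*Φ (i-1) (j-1)) + mu1*(c01 i j*Φ (i-1) j)) + mu1*(mu2*(c10 i j*Φ i (j-1)) + mu1*(c11 i j*Φ i j)))*P i j 1 1) := by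
      refine source_pt Δt z1 (P i j 1 1) (q i j 1 1) (ct i j 1 1) _ mu2 mu1 mu2 mu1
        (c00 i j) (c01 i j) (c10 i j) (c11 i j) _ _ _ _
        mu2_nonneg mu1_nonneg mu2_nonneg mu1_nonneg hA0c hC0c hB0c hD0c
        hP00f.le hP01f.le hP10f.le hP11f.le
        (le_trans (min_le_left _ _) (min_le_left _ _))
        (le_trans (min_le_right _ _) (min_le_left _ _))
        (le_trans (min_le_left _ _) (min_le_right _ _))
        (le_trans (min_le_right _ _) (min_le_right _ _))
        hΔt hz1 (hP1 i j (by omega) (by omega) (by omega) (by omega) 1 1)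
        (hct i j (by omega) (by omega) (by omega) (by omega) 1 1).1
        (fun hlt => ?_)
      obtain ⟨hce, hmin⟩ := hq2 i j (by omega) (by omega) (by omega) (by omega) 1 1 hlt
      refine ⟨?_, le_of_lt hmin⟩
      rw [hce]
      simp only [cGP, ga_zero, ga_one]
    have pq00 := mul_nonneg (by norm_num : (0:ℝ) ≤ 1/4) hB00
    have pq01 := mul_nonneg (by norm_num : (0:ℝ) ≤ 1/4) hB01
    have pq10 := mul_nonneg (by norm_num : (0:ℝ) ≤ 1/4) hB10
    have pq11 := mul_nonneg (by norm_num : (0:ℝ) ≤ 1/4) hB11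
    have hEQ : Hs Φ c00 c10 c01 c11 q ct P z1 Δt i j
        = 1/4*((mu1*(mu1*(c00 i j*Φ (i-1) (j-1)) + mu2*(c01 i j*Φ (i-1) j)) + mu2*(mu1*(c10 i j*Φ i (j-1)) + mu2*(c11 i j*Φ i j)))/3 + Δt*(ct i j 0 0*q i j 0 0 - z1*(mu1*(mu1*(c00 i j*Φ (i-1) (j-1)) + mu2*(c01 i j*Φ (i-1) j)) + mu2*(mu1*(c10 i j*Φ i (j-1)) + mu2*(c11 i j*Φ i j)))*P i j 0 0)) + 1/4*((mu1*(mu2*(c00 i j*Φ (i-1) (j-1)) + mu1*(c01 i j*Φ (i-1) j)) + mu2*(mu2*(c10 i j*Φ i (j-1)) + mu1*(c11 i j*Φ i j)))/3 + Δt*(ct i j 0 1*q i j 0 1 - z1*(mu1*(mu2*(c00 i j*Φ (i-1) (j-1)) + mu1*(c01 i j*Φ (i-1) j)) + mu2*(mu2*(c10 i j*Φ i (j-1)) + mu1*(c11 i j*Φ i j)))*P i j 0 1)) + 1/4*((mu2*(mu1*(c00 i j*Φ (i-1) (j-1)) + mu2*(c01 i j*Φ (i-1) j)) + mu1*(mu1*(c10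 i j*Φ i (j-1)) + mu2*(c11 i j*Φ i j)))/3 + Δt*(ct i j 1 0*q i j 1 0 - z1*(mu2*(mu1*(c00 i j*Φ (i-1) (j-1)) + mu2*(c01 i j*Φ (i-1) j)) + mu1*(mu1*(c10 i j*Φ i (j-1)) + mu2*(c11 i j*Φ i j)))*P i j 1 0)) + 1/4*((mu2*(mu2*(c00 i j*Φ (i-1) (j-1)) + mu1*(c01 i j*Φ (i-1) j)) + mu1*(mu2*(c10 i j*Φ i (j-1)) + mu1*(c11 i j*Φ i j)))/3 + Δt*(ct i j 1 1*q i j 1 1 - z1*(mu2*(mu2*(c00 i j*Φ (i-1) (j-1)) + mu1*(c01 i j*Φ (i-1) j)) + mu1*(mu2*(c10 i j*Φ i (j-1)) + mu1*(c11 i j*Φ i j)))*P i j 1 1)) := by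
      simp only [Hs, rbar, rGP, ga_zero, ga_one, Fin.sum_univ_two]
      rw [mu1, mu2]
      ring
    rw [hEQ]
    exact add_nonneg (add_nonneg (add_nonneg pq00 pq01) pq10) pq11
  show 0 ≤ rbarnew u1 u2 D11m D11p D12m D12p D21m D21p D22m D22p
      Φ c00 c10 c01 c11 q ct P α αt z1 Δx Δy Δt i j
  rw [rbarnew]
  exact add_nonneg (add_nonneg (add_nonneg hHc hHdx) hHdy) hHs


lemma cGP_compl (c00 c10 c01 c11 : ℕ → ℕ → ℝ) (i j : ℕ) (β γ : Fin 2) :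
    cGP (fun a b => 1 - c00 a b) (fun a b => 1 - c10 a b) (fun a b => 1 - c01 a b)
      (fun a b => 1 - c11 a b) i j β γ = 1 - cGP c00 c10 c01 c11 i j β γ := by
  simp only [cGP, ga]
  split_ifs <;> (rw [mu1, mu2]; ring)

set_option maxHeartbeats 2000000 in
/-- Theorem 3.4 (2D): with `0 ≤ r ≤ Φ` at every corner, `0 ≤ c̃ ≤ 1`, the positivity
conditions (ii)-(iv) (also for `z₂`) and the discrete pressure relation, the
Euler-forward cell-average update satisfies `0 ≤ r̄^{new}_{ij} ≤ Φ̄_{ij}` for every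
interior cell. -/
theorem bound_preserving_cell_averages_2d
    (Nx Ny : ℕ) (hNx : 4 ≤ Nx) (hNy : 4 ≤ Ny) (Δx Δy Δt : ℝ)
    (hΔx : 0 < Δx) (hΔy : 0 < Δy) (hΔt : 0 < Δt)
    (Φ c00 c10 c01 c11 : ℕ → ℕ → ℝ)
    (u1 u2 D11m D11p D12m D12p D21m D21p D22m D22p : ℕ → ℕ → Fin 2 → ℝ)
    (q ct P : ℕ → ℕ → Fin 2 → Fin 2 → ℝ) (α αt z1 z2 D11M D12M D22M D21M : ℝ)
    (hΦ : ∀ i j, i ≤ Nx → j ≤ Ny → 0 < Φ i j)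
    -- all corner concentration values lie in [0,1]
    (hc : ∀ i j, 1 ≤ i → i ≤ Nx → 1 ≤ j → j ≤ Ny →
      (0 ≤ c00 i j ∧ c00 i j ≤ 1) ∧ (0 ≤ c10 i j ∧ c10 i j ≤ 1) ∧
      (0 ≤ c01 i j ∧ c01 i j ≤ 1) ∧ (0 ≤ c11 i j ∧ c11 i j ≤ 1))
    -- (ii) convection conditions
    (hα0 : 0 < α)
    (hα1 : ∀ i j, 1 ≤ i → i ≤ Nx - 1 → 1 ≤ j → j ≤ Ny → ∀ β : Fin 2, u1 i j β < α)
    (hα2 : ∀ i j, 1 ≤ i → i ≤ Nx → 1 ≤ j → j ≤ Ny - 1 → ∀ β : Fin 2, u2 i j β < α)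
    (hCFL0 : ∀ i j, i ≤ Nx → j ≤ Ny → Δt / Δx + Δt / Δy ≤ Φ i j / (6 * α))
    (hCFL1 : ∀ i j, 1 ≤ i → i ≤ Nx - 1 → 1 ≤ j → j ≤ Ny → ∀ β : Fin 2,
      Δt / Δx + Δt / Δy ≤ Φ i (j - 1) / (6 * (α - u1 i j β)) ∧
      Δt / Δx + Δt / Δy ≤ Φ i j / (6 * (α - u1 i j β)))
    (hCFL2 : ∀ i j, 1 ≤ i → i ≤ Nx → 1 ≤ j → j ≤ Ny - 1 → ∀ β : Fin 2,
      Δt / Δx + Δt / Δy ≤ Φ (i - 1) j / (6 * (α - u2 i j β)) ∧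
      Δt / Δx + Δt / Δy ≤ Φ i j / (6 * (α - u2 i j β)))
    -- (iii) diffusion conditions
    (hD11 : ∀ i j, 1 ≤ i → i ≤ Nx - 1 → 1 ≤ j → j ≤ Ny → ∀ β : Fin 2,
      (0 ≤ D11m i j β ∧ D11m i j β ≤ D11M) ∧ (0 ≤ D11p i j β ∧ D11p i j β ≤ D11M))
    (hD12 : ∀ i j, 1 ≤ i → i ≤ Nx - 1 → 1 ≤ j → j ≤ Ny → ∀ β : Fin 2,
      |D12m i j β| ≤ D12M ∧ |D12p i j β| ≤ D12M)
    (hD22 : ∀ i j, 1 ≤ i → i ≤ Nx → 1 ≤ j → j ≤ Ny - 1 → ∀ β : Fin 2,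
      (0 ≤ D22m i j β ∧ D22m i j β ≤ D22M) ∧ (0 ≤ D22p i j β ∧ D22p i j β ≤ D22M))
    (hD21 : ∀ i j, 1 ≤ i → i ≤ Nx → 1 ≤ j → j ≤ Ny - 1 → ∀ β : Fin 2,
      |D21m i j β| ≤ D21M ∧ |D21p i j β| ≤ D21M)
    (hαt0 : 0 < αt)
    (hαt1 : (Δy / (2 * Δx)) * D11M + Real.sqrt 3 * D12M ≤ αt)
    (hαt2 : (Δx / (2 * Δy)) * D22M + Real.sqrt 3 * D21M ≤ αt)
    (hCFL3 : ∀ i j, i ≤ Nx → j ≤ Ny →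
      D11M * (Δt / Δx ^ 2) + 2 * (αt + D12M) * (Δt / (Δx * Δy)) < Φ i j / 12)
    (hCFL4 : ∀ i j, i ≤ Nx → j ≤ Ny →
      D22M * (Δt / Δy ^ 2) + 2 * (αt + D21M) * (Δt / (Δx * Δy)) < Φ i j / 12)
    -- (iv) source conditions, for z₁ and z₂
    (hz1 : 0 ≤ z1) (hz2 : 0 ≤ z2)
    (hP1 : ∀ i j, 1 ≤ i → i ≤ Nx → 1 ≤ j → j ≤ Ny → ∀ β γ : Fin 2,
      6 * Δt * z1 * max (P i j β γ) 0 ≤ 1)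
    (hP2 : ∀ i j, 1 ≤ i → i ≤ Nx → 1 ≤ j → j ≤ Ny → ∀ β γ : Fin 2,
      6 * Δt * z2 * max (P i j β γ) 0 ≤ 1)
    (hct : ∀ i j, 1 ≤ i → i ≤ Nx → 1 ≤ j → j ≤ Ny → ∀ β γ : Fin 2,
      0 ≤ ct i j β γ ∧ ct i j β γ ≤ 1)
    (hq2 : ∀ i j, 1 ≤ i → i ≤ Nx → 1 ≤ j → j ≤ Ny → ∀ β γ : Fin 2,
      q i j β γ < 0 →
        ct i j β γ = cGP c00 c10 c01 c11 i j β γ ∧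
        6 * Δt * (-q i j β γ)
          < min (min (Φ (i - 1) (j - 1)) (Φ i (j - 1))) (min (Φ (i - 1) j) (Φ i j)))
    -- discrete pressure relation on interior cells
    (hpress : ∀ i j, 2 ≤ i → i ≤ Nx - 1 → 2 ≤ j → j ≤ Ny - 1 →
      Δx * Δy * ∑ β : Fin 2, ∑ γ : Fin 2, (1 / 2 : ℝ) * (1 / 2 : ℝ) *
          ((z1 * rGP Φ c00 c10 c01 c11 i j β γ
            + z2 * (phiGP Φ i j β γ - rGP Φ c00 c10 c01 c11 i j β γ)) * P i j β γ)
        = Δy * ∑ β : Fin 2, (1 / 2 : ℝ) * (u1 (i - 1) j β - u1 i j β)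
          + Δx * ∑ β : Fin 2, (1 / 2 : ℝ) * (u2 i (j - 1) β - u2 i j β)
          + Δx * Δy * ∑ β : Fin 2, ∑ γ : Fin 2, (1 / 2 : ℝ) * (1 / 2 : ℝ) * q i j β γ) :
    ∀ i j, 2 ≤ i → i ≤ Nx - 1 → 2 ≤ j → j ≤ Ny - 1 →
      0 ≤ rbarnew u1 u2 D11m D11p D12m D12p D21m D21p D22m D22p
            Φ c00 c10 c01 c11 q ct P α αt z1 Δx Δy Δt i j ∧
      rbarnew u1 u2 D11m D11p D12m D12p D21m D21p D22m D22p
            Φ c00 c10 c01 c11 q ct P α αt z1 Δx Δy Δt i j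
        ≤ (Φ (i - 1) (j - 1) + Φ i (j - 1) + Φ (i - 1) j + Φ i j) / 4 := by
  intro i j hi2 hiN hj2 hjN
  constructor
  · exact pos_lemma Nx Ny hNx hNy Δx Δy Δt hΔx hΔy hΔt Φ c00 c10 c01 c11
      u1 u2 D11m D11p D12m D12p D21m D21p D22m D22p q ct P α αt z1 D11M D12M D22M D21M
      hΦ hc hα0 hα1 hα2 hCFL0 hCFL1 hCFL2 hD11 hD12 hD22 hD21 hαt0 hαt1 hαt2 hCFL3 hCFL4
      hz1 hP1 hct hq2 i j hi2 hiN hj2 hjN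
  · have hc' : ∀ a b, 1 ≤ a → a ≤ Nx → 1 ≤ b → b ≤ Ny →
        (0 ≤ 1 - c00 a b ∧ 1 - c00 a b ≤ 1) ∧ (0 ≤ 1 - c10 a b ∧ 1 - c10 a b ≤ 1) ∧
        (0 ≤ 1 - c01 a b ∧ 1 - c01 a b ≤ 1) ∧ (0 ≤ 1 - c11 a b ∧ 1 - c11 a b ≤ 1) := by
      intro a b h1 h2 h3 h4
      obtain ⟨⟨p1, p2⟩, ⟨p3, p4⟩, ⟨p5, p6⟩, ⟨p7, p8⟩⟩ := hc a b h1 h2 h3 h4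
      exact ⟨⟨by linarith, by linarith⟩, ⟨by linarith, by linarith⟩,
        ⟨by linarith, by linarith⟩, ⟨by linarith, by linarith⟩⟩
    have hct' : ∀ a b, 1 ≤ a → a ≤ Nx → 1 ≤ b → b ≤ Ny → ∀ β γ : Fin 2,
        0 ≤ 1 - ct a b β γ ∧ 1 - ct a b β γ ≤ 1 := by
      intro a b h1 h2 h3 h4 β γ
      obtain ⟨p1, p2⟩ := hct a b h1 h2 h3 h4 β γ
      exact ⟨by linarith, by linarith⟩
    have hq2' : ∀ a b, 1 ≤ a → a ≤ Nx → 1 ≤ b → b ≤ Ny → ∀ β γ : Fin 2,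
        q a b β γ < 0 →
          1 - ct a b β γ = cGP (fun a b => 1 - c00 a b) (fun a b => 1 - c10 a b)
            (fun a b => 1 - c01 a b) (fun a b => 1 - c11 a b) a b β γ ∧
          6 * Δt * (-q a b β γ)
            < min (min (Φ (a - 1) (b - 1)) (Φ a (b - 1))) (min (Φ (a - 1) b) (Φ a b)) := by
      intro a b h1 h2 h3 h4 β γ hlt
      obtain ⟨p1, p2⟩ := hq2 a b h1 h2 h3 h4 β γ hlt
      refine ⟨?_, p2⟩
      rw [cGP_compl, p1]
    have hpos2 := pos_lemma Nx Ny hNx hNy Δx Δy Δt hΔx hΔy hΔt Φ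
      (fun a b => 1 - c00 a b) (fun a b => 1 - c10 a b) (fun a b => 1 - c01 a b)
      (fun a b => 1 - c11 a b)
      u1 u2 D11m D11p D12m D12p D21m D21p D22m D22p q (fun a b β γ => 1 - ct a b β γ) P
      α αt z2 D11M D12M D22M D21M
      hΦ hc' hα0 hα1 hα2 hCFL0 hCFL1 hCFL2 hD11 hD12 hD22 hD21 hαt0 hαt1 hαt2 hCFL3 hCFL4
      hz2 hP2 hct' hq2' i j hi2 hiN hj2 hjN
    have hpr := hpress i j hi2 hiN hj2 hjN
    simp only [Fin.sum_univ_two] at hpr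
    have hx0 : Δx ≠ 0 := ne_of_gt hΔx
    have hy0 : Δy ≠ 0 := ne_of_gt hΔy
    have h4 : Δx*Δy*(Δt/Δx*((u1 (i-1) j 0 - u1 i j 0 + (u1 (i-1) j 1 - u1 i j 1))/2) + Δt/Δy*((u2 i (j-1) 0 - u2 i j 0 + (u2 i (j-1) 1 - u2 i j 1))/2) + Δt*((q i j 0 0 + q i j 0 1 + q i j 1 0 + q i j 1 1)/4))
        = Δx*Δy*(Δt*(((z1*rGP Φ c00 c10 c01 c11 i j 0 0 + z2*(phiGP Φ i j 0 0 - rGP Φ c00 c10 c01 c11 i j 0 0))*P i j 0 0 + (z1*rGP Φ c00 c10 c01 c11 i j 0 1 + z2*(phiGP Φ i j 0 1 - rGP Φ c00 c10 c01 c11 i j 0 1))*P i j 0 1 + (z1*rGP Φ c00 c10 c01 c11 i j 1 0 + z2*(phiGP Φ i j 1 0 - rGP Φ c00 c10 c01 c11 i j 1 0))*P i j 1 0 + (z1*rGP Φ c00 c10 c01 c11 i j 1 1 + z2*(phiGP Φ i j 1 1 - rGP Φ c00 c10 c01 c11 i j 1 1))*P i j 1 1)/4)) := by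
      linear_combination (norm := skip) (-Δt) * hpr
      field_simp
      ring
    have hz : Δt/Δx*((u1 (i-1) j 0 - u1 i j 0 + (u1 (i-1) j 1 - u1 i j 1))/2) + Δt/Δy*((u2 i (j-1) 0 - u2 i j 0 + (u2 i (j-1) 1 - u2 i j 1))/2) + Δt*((q i j 0 0 + q i j 0 1 + q i j 1 0 + q i j 1 1)/4) = Δt*(((z1*rGP Φ c00 c10 c01 c11 i j 0 0 + z2*(phiGP Φ i j 0 0 - rGP Φ c00 c10 c01 c11 i j 0 0))*P i j 0 0 + (z1*rGP Φ c00 c10 c01 c11 i j 0 1 + z2*(phiGP Φ i j 0 1 - rGP Φ c00 c10 c01 c11 i j 0 1))*P i j 0 1 + (z1*rGP Φ c00 c10 c01 c11 i j 1 0 + z2*(phiGP Φ i j 1 0 - rGP Φ c00 c10 c01 c11 i j 1 0))*P i j 1 0 + (z1*rGP Φ c00 c10 c01 c11 i j 1 1 + z2*(phiGP Φ i j 1 1 - rGP Φ c00 c10 c01 c11 i j 1 1))*P i j 1 1)/4) :=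
      mul_left_cancel₀ (mul_ne_zero hx0 hy0) h4
    have e1 : i - 1 + 1 = i := by omega
    have e2 : j - 1 + 1 = j := by omega
    have e3 : i - 1 - 1 + 1 = i - 1 := by omega
    have e4 : j - 1 - 1 + 1 = j - 1 := by omega
    have hHcC : Hc u1 u2 Φ (fun a b => 1 - c00 a b) (fun a b => 1 - c10 a b) (fun a b => 1 - c01 a b) (fun a b => 1 - c11 a b) α Δx Δy Δt i j
        = (Φ (i - 1) (j - 1) + Φ i (j - 1) + Φ (i - 1) j + Φ i j)/4/3 - Hc u1 u2 Φ c00 c10 c01 c11 α Δx Δy Δt i j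
          + Δt/Δx*((u1 (i-1) j 0 - u1 i j 0 + (u1 (i-1) j 1 - u1 i j 1))/2) + Δt/Δy*((u2 i (j-1) 0 - u2 i j 0 + (u2 i (j-1) 1 - u2 i j 1))/2) := by
      simp only [Hc, rbar, uc1, uc2, cpV, cmV, cpH, cmH, ga_zero, ga_one, Fin.sum_univ_two, e1, e2]
      rw [mu1, mu2]; ring
    have hHdxC : Hdx D11m D11p D12m D12p Φ (fun a b => 1 - c00 a b) (fun a b => 1 - c10 a b) (fun a b => 1 - c01 a b) (fun a b => 1 - c11 a b) αt Δx Δy Δt i j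
        = (Φ (i - 1) (j - 1) + Φ i (j - 1) + Φ (i - 1) j + Φ i j)/4/6 - Hdx D11m D11p D12m D12p Φ c00 c10 c01 c11 αt Δx Δy Δt i j := by
      simp only [Hdx, rbar, GxV, cxmV, cxpV, cymV, cypV, jumpV, cpV, cmV, ga_zero, ga_one,
        Fin.sum_univ_two, e1, e3]
      rw [mu1, mu2]; ring
    have hHdyC : Hdy D21m D21p D22m D22p Φ (fun a b => 1 - c00 a b) (fun a b => 1 - c10 a b) (fun a b => 1 - c01 a b) (fun a b => 1 - c11 a b) αt Δx Δy Δt i j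
        = (Φ (i - 1) (j - 1) + Φ i (j - 1) + Φ (i - 1) j + Φ i j)/4/6 - Hdy D21m D21p D22m D22p Φ c00 c10 c01 c11 αt Δx Δy Δt i j := by
      simp only [Hdy, rbar, GyH, cymH, cypH, cxmH, cxpH, jumpH, cpH, cmH, ga_zero, ga_one,
        Fin.sum_univ_two, e2, e4]
      rw [mu1, mu2]; ring
    have hHsC : Hs Φ (fun a b => 1 - c00 a b) (fun a b => 1 - c10 a b) (fun a b => 1 - c01 a b) (fun a b => 1 - c11 a b) q (fun a b β γ => 1 - ct a b β γ) P z2 Δt i j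
        = (Φ (i - 1) (j - 1) + Φ i (j - 1) + Φ (i - 1) j + Φ i j)/4/3 - Hs Φ c00 c10 c01 c11 q ct P z1 Δt i j + Δt*((q i j 0 0 + q i j 0 1 + q i j 1 0 + q i j 1 1)/4) - Δt*(((z1*rGP Φ c00 c10 c01 c11 i j 0 0 + z2*(phiGP Φ i j 0 0 - rGP Φ c00 c10 c01 c11 i j 0 0))*P i j 0 0 + (z1*rGP Φ c00 c10 c01 c11 i j 0 1 + z2*(phiGP Φ i j 0 1 - rGP Φ c00 c10 c01 c11 i j 0 1))*P i j 0 1 + (z1*rGP Φ c00 c10 c01 c11 i j 1 0 + z2*(phiGP Φ i j 1 0 - rGP Φ c00 c10 c01 c11 i j 1 0))*P i j 1 0 + (z1*rGP Φ c00 c10 c01 c11 i j 1 1 + z2*(phiGP Φ i j 1 1 - rGP Φ c00 c10 c01 c11 i j 1 1))*P i j 1 1)/4) := by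
      simp only [Hs, rbar, rGP, phiGP, ga_zero, ga_one, Fin.sum_univ_two]
      rw [mu1, mu2]; ring
    have hstep : rbarnew u1 u2 D11m D11p D12m D12p D21m D21p D22m D22p Φ (fun a b => 1 - c00 a b) (fun a b => 1 - c10 a b) (fun a b => 1 - c01 a b) (fun a b => 1 - c11 a b) q (fun a b β γ => 1 - ct a b β γ) P α αt z2 Δx Δy Δt i j
        = (Φ (i - 1) (j - 1) + Φ i (j - 1) + Φ (i - 1) j + Φ i j)/4
          - rbarnew u1 u2 D11m D11p D12m D12p D21m D21p D22m D22p Φ c00 c10 c01 c11 q ct P α αt z1 Δx Δy Δt i j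
          - (Δt*(((z1*rGP Φ c00 c10 c01 c11 i j 0 0 + z2*(phiGP Φ i j 0 0 - rGP Φ c00 c10 c01 c11 i j 0 0))*P i j 0 0 + (z1*rGP Φ c00 c10 c01 c11 i j 0 1 + z2*(phiGP Φ i j 0 1 - rGP Φ c00 c10 c01 c11 i j 0 1))*P i j 0 1 + (z1*rGP Φ c00 c10 c01 c11 i j 1 0 + z2*(phiGP Φ i j 1 0 - rGP Φ c00 c10 c01 c11 i j 1 0))*P i j 1 0 + (z1*rGP Φ c00 c10 c01 c11 i j 1 1 + z2*(phiGP Φ i j 1 1 - rGP Φ c00 c10 c01 c11 i j 1 1))*P i j 1 1)/4) - (Δt/Δx*((u1 (i-1) j 0 - u1 i j 0 + (u1 (i-1) j 1 - u1 i j 1))/2) + Δt/Δy*((u2 i (j-1) 0 - u2 i j 0 + (u2 i (j-1) 1 - u2 i j 1))/2) + Δt*((q i j 0 0 + q i j 0 1 + q i j 1 0 + q i j 1 1)/4))) := by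
      simp only [rbarnew]
      linear_combination hHcC + hHdxC + hHdyC + hHsC
    linarith [hpos2, hstep, hz]

end DG2D
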